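/- arXiv:1401.3059 — 5 statements merged into one kernel-verified Lean document; each statement's English description precedes it below -/
import Mathlib

section
/- If q_i(t) = T_k(A⃗t)Q_i, i = 1,...,n, solve the generalized n-body equations q̈_i = Σ_{j≠i} m_j (q_j - q_i) ‖q_j - q_i‖^{2a}, then the constant vectors Q_i satisfy 𝐀²Q_i = Σ_{j≠i} m_j (Q_i - Q_j) ‖Q_i - Q_j‖^{2a} for every i. -/
open Real Finset Matrix Filter

/-- The 2×2 rotation matrix of angle `t`. -/
noncomputable def rot (t : ℝ) : Matrix (Fin 2) (Fin 2) ℝ :=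
  !![Real.cos t, -Real.sin t; Real.sin t, Real.cos t]

/-- The k×k block-diagonal matrix with 2×2 rotation blocks `rot (θ s)`
(and a final diagonal entry 1 if `k` is odd). -/
noncomputable def Tk (k : ℕ) (θ : Fin (k / 2) → ℝ) : Matrix (Fin k) (Fin k) ℝ :=
  Matrix.of fun i j =>
    if h : (i : ℕ) / 2 = (j : ℕ) / 2 ∧ (i : ℕ) / 2 < k / 2 then
      rot (θ ⟨(i : ℕ) / 2, h.2⟩) ⟨(i : ℕ) % 2, Nat.mod_lt _ (by norm_num)⟩
        ⟨(j : ℕ) % 2, Nat.mod_lt _ (by norm_num)⟩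
    else if i = j then 1 else 0

/-- The diagonal matrix `diag (A₁, A₁, ..., A_p, A_p, [0])`. -/
noncomputable def Amat (k : ℕ) (A : Fin (k / 2) → ℝ) : Matrix (Fin k) (Fin k) ℝ :=
  Matrix.diagonal fun i => if h : (i : ℕ) / 2 < k / 2 then A ⟨(i : ℕ) / 2, h⟩ else 0

/-- Matrix action on Euclidean vectors. -/
noncomputable def mulVecE {k : ℕ} (M : Matrix (Fin k) (Fin k) ℝ)
    (x : EuclideanSpace ℝ (Fin k)) : EuclideanSpace ℝ (Fin k) :=
  WithLp.toLp 2 (M.mulVec x)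

noncomputable def drot (t : ℝ) : Matrix (Fin 2) (Fin 2) ℝ :=
  !![-Real.sin t, -Real.cos t; Real.cos t, -Real.sin t]

noncomputable def dTk (k : ℕ) (A : Fin (k / 2) → ℝ) (t : ℝ) : Matrix (Fin k) (Fin k) ℝ :=
  Matrix.of fun i j =>
    if h : (i : ℕ) / 2 = (j : ℕ) / 2 ∧ (i : ℕ) / 2 < k / 2 then
      A ⟨(i : ℕ) / 2, h.2⟩ * drot (A ⟨(i : ℕ) / 2, h.2⟩ * t)
        ⟨(i : ℕ) % 2, Nat.mod_lt _ (by norm_num)⟩ ⟨(j : ℕ) % 2, Nat.mod_lt _ (by norm_num)⟩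
    else 0

noncomputable def ddTk (k : ℕ) (A : Fin (k / 2) → ℝ) (t : ℝ) : Matrix (Fin k) (Fin k) ℝ :=
  Matrix.of fun i j =>
    if h : (i : ℕ) / 2 = (j : ℕ) / 2 ∧ (i : ℕ) / 2 < k / 2 then
      -(A ⟨(i : ℕ) / 2, h.2⟩ ^ 2) * rot (A ⟨(i : ℕ) / 2, h.2⟩ * t)
        ⟨(i : ℕ) % 2, Nat.mod_lt _ (by norm_num)⟩ ⟨(j : ℕ) % 2, Nat.mod_lt _ (by norm_num)⟩
    else 0

lemma rot_zero_apply (r c : Fin 2) : rot 0 r c = if r = c then 1 else 0 := by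
  fin_cases r <;> fin_cases c <;> simp [rot]

lemma hasDerivAt_rot (c0 : ℝ) (r c : Fin 2) (t : ℝ) :
    HasDerivAt (fun t => rot (c0 * t) r c) (c0 * drot (c0 * t) r c) t := by
  have h : HasDerivAt (fun t : ℝ => c0 * t) c0 t := by
    simpa using (hasDerivAt_id t).const_mul c0
  fin_cases r <;> fin_cases c <;> simp [rot, drot]
  · simpa [mul_comm] using h.cos
  · simpa [mul_comm] using h.sin.fun_neg
  · simpa [mul_comm] using h.sin
  · simpa [mul_comm] using h.cos

lemma hasDerivAt_drot (c0 : ℝ) (r c : Fin 2) (t : ℝ) :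
    HasDerivAt (fun t => c0 * drot (c0 * t) r c) (-(c0 ^ 2) * rot (c0 * t) r c) t := by
  have h : HasDerivAt (fun t : ℝ => c0 * t) c0 t := by
    simpa using (hasDerivAt_id t).const_mul c0
  fin_cases r <;> fin_cases c <;> simp [rot, drot]
  · simpa [mul_comm, pow_two, mul_assoc] using (h.sin.const_mul c0).fun_neg
  · simpa [mul_comm, pow_two, mul_assoc] using (h.cos.const_mul c0).fun_neg
  · simpa [mul_comm, pow_two, mul_assoc] using h.cos.const_mul c0
  · simpa [mul_comm, pow_two, mul_assoc] using (h.sin.const_mul c0).fun_neg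

lemma hasDerivAt_Tk_entry (k : ℕ) (A : Fin (k / 2) → ℝ) (i j : Fin k) (t : ℝ) :
    HasDerivAt (fun t => Tk k (fun s => A s * t) i j) (dTk k A t i j) t := by
  simp only [Tk, dTk, Matrix.of_apply]
  split_ifs with h h'
  · exact hasDerivAt_rot _ _ _ t
  · exact hasDerivAt_const t 1
  · exact hasDerivAt_const t 0

lemma hasDerivAt_dTk_entry (k : ℕ) (A : Fin (k / 2) → ℝ) (i j : Fin k) (t : ℝ) :
    HasDerivAt (fun t => dTk k A t i j) (ddTk k A t i j) t := by
  simp only [dTk, ddTk, Matrix.of_apply]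
  split_ifs with h
  · exact hasDerivAt_drot _ _ _ t
  · exact hasDerivAt_const t 0

lemma Tk_zero (k : ℕ) (A : Fin (k / 2) → ℝ) : Tk k (fun s => A s * 0) = 1 := by
  ext i j
  simp only [Tk, Matrix.of_apply, Matrix.one_apply, mul_zero]
  split_ifs with h h' h'
  · subst h'; rw [rot_zero_apply, if_pos rfl]
  · have hm : (i : ℕ) % 2 ≠ (j : ℕ) % 2 := by
      intro hmm; exact h' (Fin.ext (by omega))
    rw [rot_zero_apply, if_neg (fun hc => hm (by simpa using congrArg Fin.val hc))]
  · rfl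
  · rfl

lemma ddTk_zero (k : ℕ) (A : Fin (k / 2) → ℝ) : ddTk k A 0 = -(Amat k A ^ 2) := by
  ext i j
  rcases eq_or_ne i j with rfl | hij
  · simp only [ddTk, Matrix.of_apply, Matrix.neg_apply, pow_two, Amat,
      Matrix.diagonal_mul_diagonal, Matrix.diagonal_apply_eq, mul_zero]
    rw [rot_zero_apply]
    by_cases h : (i : ℕ) / 2 < k / 2
    · simp [h]
    · rw [dif_neg (by tauto), dif_neg h]; ring
  · simp only [ddTk, Matrix.of_apply, Matrix.neg_apply, pow_two, Amat,
      Matrix.diagonal_mul_diagonal, Matrix.diagonal_apply_ne _ hij, neg_zero, mul_zero]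
    split_ifs with h
    · have hm : (i : ℕ) % 2 ≠ (j : ℕ) % 2 := by
        intro hmm; exact hij (Fin.ext (by omega))
      rw [rot_zero_apply, if_neg (fun hc => hm (by simpa using congrArg Fin.val hc)), mul_zero]
    · rfl

lemma hasDerivAt_mulVecE_Tk {k : ℕ} (A : Fin (k / 2) → ℝ) (x : EuclideanSpace ℝ (Fin k))
    (t : ℝ) : HasDerivAt (fun t => mulVecE (Tk k (fun s => A s * t)) x)
      (mulVecE (dTk k A t) x) t := by
  have hf : HasDerivAt (fun t => (Tk k (fun s => A s * t)).mulVec (x : Fin k → ℝ))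
      ((dTk k A t).mulVec (x : Fin k → ℝ)) t := by
    rw [hasDerivAt_pi]
    intro l
    simp only [Matrix.mulVec, dotProduct]
    exact HasDerivAt.fun_sum fun j _ => (hasDerivAt_Tk_entry k A l j t).mul_const (x j)
  exact ((EuclideanSpace.equiv (Fin k) ℝ).symm.toContinuousLinearMap.hasFDerivAt).comp_hasDerivAt
    t hf

lemma hasDerivAt_mulVecE_dTk {k : ℕ} (A : Fin (k / 2) → ℝ) (x : EuclideanSpace ℝ (Fin k))
    (t : ℝ) : HasDerivAt (fun t => mulVecE (dTk k A t) x)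
      (mulVecE (ddTk k A t) x) t := by
  have hf : HasDerivAt (fun t => (dTk k A t).mulVec (x : Fin k → ℝ))
      ((ddTk k A t).mulVec (x : Fin k → ℝ)) t := by
    rw [hasDerivAt_pi]
    intro l
    simp only [Matrix.mulVec, dotProduct]
    exact HasDerivAt.fun_sum fun j _ => (hasDerivAt_dTk_entry k A l j t).mul_const (x j)
  exact ((EuclideanSpace.equiv (Fin k) ℝ).symm.toContinuousLinearMap.hasFDerivAt).comp_hasDerivAt
    t hf

/-- if `q_i(t) = T_k(A⃗t) Q_i` solve the generalized n-body equations, then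
the `Q_i` satisfy the relative equilibrium criterion. -/
theorem criterion_of_solution {k n : ℕ} (hn : 3 ≤ n) (A : Fin (k / 2) → ℝ)
    (hA : ∀ s, 0 < A s) (m : Fin n → ℝ) (hm : ∀ i, 0 < m i) (a : ℝ) (ha : a < -1/2)
    (Q : Fin n → EuclideanSpace ℝ (Fin k)) (hQ : ∀ i j, i ≠ j → Q i ≠ Q j)
    (q : Fin n → ℝ → EuclideanSpace ℝ (Fin k))
    (hq : ∀ i t, q i t = mulVecE (Tk k (fun s => A s * t)) (Q i))
    (heq : ∀ i t, deriv (deriv (q i)) t =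
      ∑ j ∈ Finset.univ.filter (· ≠ i), (m j * ‖q j t - q i t‖ ^ (2 * a)) • (q j t - q i t)) :
    ∀ i, mulVecE ((Amat k A) ^ 2) (Q i) =
      ∑ j ∈ Finset.univ.filter (· ≠ i), (m j * ‖Q i - Q j‖ ^ (2 * a)) • (Q i - Q j) := by
  intro i
  have hq0 : ∀ j, q j 0 = Q j := by
    intro j
    rw [hq j 0, Tk_zero]
    show WithLp.toLp 2 ((1 : Matrix (Fin k) (Fin k) ℝ).mulVec (Q j)) = Q j
    rw [Matrix.one_mulVec]
  have hqi : q i = fun t => mulVecE (Tk k (fun s => A s * t)) (Q i) := funext (hq i)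
  have hderiv : deriv (q i) = fun t => mulVecE (dTk k A t) (Q i) := by
    funext t
    rw [hqi]
    exact (hasDerivAt_mulVecE_Tk A (Q i) t).deriv
  have h2 : deriv (deriv (q i)) 0 = mulVecE (ddTk k A 0) (Q i) := by
    rw [hderiv]
    exact (hasDerivAt_mulVecE_dTk A (Q i) 0).deriv
  have key := heq i 0
  rw [h2, ddTk_zero] at key
  have hneg : mulVecE (-(Amat k A ^ 2)) (Q i) = -mulVecE (Amat k A ^ 2) (Q i) := by
    show WithLp.toLp 2 ((-(Amat k A ^ 2)).mulVec (Q i)) = -WithLp.toLp 2 ((Amat k A ^ 2).mulVec (Q i))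
    rw [Matrix.neg_mulVec]; rfl
  rw [hneg] at key
  have key2 : mulVecE (Amat k A ^ 2) (Q i) =
      -∑ j ∈ Finset.univ.filter (· ≠ i), (m j * ‖q j 0 - q i 0‖ ^ (2 * a)) • (q j 0 - q i 0) :=
    neg_eq_iff_eq_neg.mp key
  rw [key2, ← Finset.sum_neg_distrib]
  refine Finset.sum_congr rfl fun j _ => ?_
  rw [hq0, hq0, ← smul_neg, neg_sub, norm_sub_rev]
end

section
/- Let Q₁,...,Q_n ∈ ℝ^k be pairwise distinct points satisfying the relative equilibrium criterion 𝐀²Q_i = Σ_{j≠i} m_j (Q_i - Q_j)‖Q_i - Q_j‖^{2a}. Then for any 2 ≤ l ≤ n, writing R_{il} = Σ_{j=l+1}^{n} m_j (Q_i - Q_j)‖Q_i - Q_j‖^{2a}, one has 𝐀² Σ_{i=2}^{l} m_i (Q₁ - Q_i) = (Σ_{i=1}^{l} m_i) Σ_{j=2}^{l} m_j (Q₁ - Q_j)‖Q₁ - Q_j‖^{2a} + Σ_{i=2}^{l} m_i (R_{1l} - R_{il}). -/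
open Real Finset Matrix Filter

lemma mulVecE_add {k : ℕ} (M : Matrix (Fin k) (Fin k) ℝ) (x y : EuclideanSpace ℝ (Fin k)) :
    mulVecE M (x + y) = mulVecE M x + mulVecE M y := by
  simp [mulVecE, Matrix.mulVec_add]

lemma mulVecE_smul {k : ℕ} (M : Matrix (Fin k) (Fin k) ℝ) (c : ℝ) (x : EuclideanSpace ℝ (Fin k)) :
    mulVecE M (c • x) = c • mulVecE M x := by
  simp [mulVecE, Matrix.mulVec_smul]

lemma mulVecE_zero {k : ℕ} (M : Matrix (Fin k) (Fin k) ℝ) :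
    mulVecE M (0 : EuclideanSpace ℝ (Fin k)) = 0 := by
  simp [mulVecE]

lemma mulVecE_sub {k : ℕ} (M : Matrix (Fin k) (Fin k) ℝ) (x y : EuclideanSpace ℝ (Fin k)) :
    mulVecE M (x - y) = mulVecE M x - mulVecE M y := by
  rw [sub_eq_add_neg, sub_eq_add_neg, ← neg_one_smul ℝ y, mulVecE_add, mulVecE_smul,
    neg_one_smul]

lemma mulVecE_sum {k : ℕ} (M : Matrix (Fin k) (Fin k) ℝ) {ι : Type*} (s : Finset ι)
    (f : ι → EuclideanSpace ℝ (Fin k)) :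
    mulVecE M (∑ i ∈ s, f i) = ∑ i ∈ s, mulVecE M (f i) := by
  induction s using Finset.cons_induction with
  | empty => simpa using mulVecE_zero M
  | cons i s hi ih => rw [Finset.sum_cons, Finset.sum_cons, mulVecE_add, ih]

/-- the "winning identity" (Lemma 2 of the paper). -/
theorem winning_identity {k n : ℕ} (A : Fin (k / 2) → ℝ) (hA : ∀ s, 0 < A s)
    (m : ℕ → ℝ) (hm : ∀ i ∈ Finset.Icc 1 n, 0 < m i) (a : ℝ) (ha : a < -1/2)
    (Q : ℕ → EuclideanSpace ℝ (Fin k))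
    (hdist : ∀ i ∈ Finset.Icc 1 n, ∀ j ∈ Finset.Icc 1 n, i ≠ j → Q i ≠ Q j)
    (hcrit : ∀ i ∈ Finset.Icc 1 n, mulVecE ((Amat k A) ^ 2) (Q i) =
      ∑ j ∈ (Finset.Icc 1 n).erase i, (m j * ‖Q i - Q j‖ ^ (2 * a)) • (Q i - Q j))
    (l : ℕ) (hl2 : 2 ≤ l) (hln : l ≤ n)
    (R : ℕ → EuclideanSpace ℝ (Fin k))
    (hR : ∀ i, R i = ∑ j ∈ Finset.Icc (l + 1) n,
      (m j * ‖Q i - Q j‖ ^ (2 * a)) • (Q i - Q j)) :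
    mulVecE ((Amat k A) ^ 2) (∑ i ∈ Finset.Icc 2 l, m i • (Q 1 - Q i)) =
      (∑ i ∈ Finset.Icc 1 l, m i) •
        ∑ j ∈ Finset.Icc 2 l, (m j * ‖Q 1 - Q j‖ ^ (2 * a)) • (Q 1 - Q j) +
      ∑ i ∈ Finset.Icc 2 l, m i • (R 1 - R i) := by
  set F : ℕ → ℕ → EuclideanSpace ℝ (Fin k) :=
    fun i j => (m j * ‖Q i - Q j‖ ^ (2 * a)) • (Q i - Q j) with hF
  -- antisymmetry
  have hanti : ∀ i j, m i • F i j = -(m j • F j i) := by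
    intro i j
    simp only [hF, smul_smul]
    rw [norm_sub_rev (Q i) (Q j), show Q i - Q j = -(Q j - Q i) from (neg_sub _ _).symm,
      smul_neg, ← neg_smul, ← neg_smul]
    congr 1
    ring
  -- criterion split at l
  have hcrit' : ∀ i ∈ Finset.Icc 1 l, mulVecE ((Amat k A) ^ 2) (Q i) =
      (∑ j ∈ (Finset.Icc 1 l).erase i, F i j) + R i := by
    intro i hi
    rw [Finset.mem_Icc] at hi
    have hin : i ∈ Finset.Icc 1 n := Finset.mem_Icc.mpr ⟨hi.1, hi.2.trans hln⟩
    have hset : (Finset.Icc 1 n).erase i =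
        ((Finset.Icc 1 l).erase i) ∪ Finset.Icc (l + 1) n := by
      ext j
      simp only [Finset.mem_erase, Finset.mem_Icc, Finset.mem_union]
      omega
    have hdisj : Disjoint ((Finset.Icc 1 l).erase i) (Finset.Icc (l + 1) n) := by
      rw [Finset.disjoint_left]
      intro j hj hj'
      simp only [Finset.mem_erase, Finset.mem_Icc] at hj hj'
      omega
    rw [hcrit i hin, hset, Finset.sum_union hdisj, hR i]
  have h1l : (1 : ℕ) ∈ Finset.Icc 1 l := Finset.mem_Icc.mpr ⟨le_refl 1, by omega⟩
  have herase1 : (Finset.Icc 1 l).erase 1 = Finset.Icc 2 l := by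
    ext j; simp only [Finset.mem_erase, Finset.mem_Icc]; omega
  set S : EuclideanSpace ℝ (Fin k) := ∑ j ∈ Finset.Icc 2 l, F 1 j with hS
  have hB1 : mulVecE ((Amat k A) ^ 2) (Q 1) = S + R 1 := by
    rw [hcrit' 1 h1l, herase1]
  -- decompose (Icc 1 l).erase i for i ∈ Icc 2 l
  have hTi : ∀ i ∈ Finset.Icc 2 l, mulVecE ((Amat k A) ^ 2) (Q i) =
      (F i 1 + ∑ j ∈ (Finset.Icc 2 l).erase i, F i j) + R i := by
    intro i hi
    rw [Finset.mem_Icc] at hi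
    have hi1 : i ∈ Finset.Icc 1 l := Finset.mem_Icc.mpr ⟨by omega, hi.2⟩
    have hset : (Finset.Icc 1 l).erase i = insert 1 ((Finset.Icc 2 l).erase i) := by
      ext j
      simp only [Finset.mem_erase, Finset.mem_Icc, Finset.mem_insert]
      omega
    have h1not : (1 : ℕ) ∉ (Finset.Icc 2 l).erase i := by
      simp [Finset.mem_erase, Finset.mem_Icc]
    rw [hcrit' i hi1, hset, Finset.sum_insert h1not]
  -- double-sum vanishes
  have hdouble : ∑ i ∈ Finset.Icc 2 l, ∑ j ∈ (Finset.Icc 2 l).erase i, m i • F i j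
      = 0 := by
    set T := ∑ i ∈ Finset.Icc 2 l, ∑ j ∈ (Finset.Icc 2 l).erase i, m i • F i j with hT
    have hswap : T = ∑ j ∈ Finset.Icc 2 l, ∑ i ∈ (Finset.Icc 2 l).erase j, m i • F i j := by
      rw [hT]
      exact Finset.sum_comm' (by
        intro x y
        simp only [Finset.mem_erase, Finset.mem_Icc]
        tauto)
    have hneg : T = -T := by
      nth_rewrite 2 [hT]
      rw [hswap]
      rw [← Finset.sum_neg_distrib]
      refine Finset.sum_congr rfl fun j hj => ?_
      rw [← Finset.sum_neg_distrib]
      refine Finset.sum_congr rfl fun i hi => ?_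
      rw [hanti i j]
    have := hneg
    have h2 : T + T = 0 := by nth_rewrite 1 [hneg]; exact neg_add_cancel T
    have : (2 : ℝ) • T = 0 := by rw [two_smul]; exact h2
    have h2ne : (2 : ℝ) ≠ 0 := by norm_num
    rcases smul_eq_zero.mp this with h | h
    · exact absurd h h2ne
    · exact h
  -- the column sum against Q 1
  have hcol : ∑ i ∈ Finset.Icc 2 l, m i • F i 1 = -(m 1 • S) := by
    rw [hS, Finset.smul_sum, ← Finset.sum_neg_distrib]
    exact Finset.sum_congr rfl fun i _ => hanti i 1
  -- main computation
  rw [mulVecE_sum]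
  have hterm : ∀ i ∈ Finset.Icc 2 l, mulVecE ((Amat k A) ^ 2) (m i • (Q 1 - Q i)) =
      m i • S - (m i • F i 1 + m i • ∑ j ∈ (Finset.Icc 2 l).erase i, F i j)
        + m i • (R 1 - R i) := by
    intro i hi
    rw [mulVecE_smul, mulVecE_sub, hB1, hTi i hi]
    rw [show S + R 1 - (F i 1 + ∑ j ∈ (Finset.Icc 2 l).erase i, F i j + R i)
      = S - (F i 1 + ∑ j ∈ (Finset.Icc 2 l).erase i, F i j) + (R 1 - R i) by abel]
    rw [smul_add, smul_sub, smul_add]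
  rw [Finset.sum_congr rfl hterm, Finset.sum_add_distrib, Finset.sum_sub_distrib,
    Finset.sum_add_distrib, hcol]
  have hpush : ∑ x ∈ Finset.Icc 2 l, m x • ∑ j ∈ (Finset.Icc 2 l).erase x, F x j
      = ∑ x ∈ Finset.Icc 2 l, ∑ j ∈ (Finset.Icc 2 l).erase x, m x • F x j :=
    Finset.sum_congr rfl fun x _ => Finset.smul_sum
  have hsum1 : ∑ i ∈ Finset.Icc 1 l, m i = m 1 + ∑ i ∈ Finset.Icc 2 l, m i := by
    rw [← herase1, Finset.add_sum_erase _ _ h1l]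
  rw [hpush, hdouble, add_zero, ← Finset.sum_smul, hsum1, add_smul]
  abel
end

section
/- Fix A⃗ ∈ ℝ_{>0}^p, masses m₁,...,m_n > 0, and a < -1/2, with 𝐀 invertible (k = 2p even). Then there exists C > 0 such that every relative equilibrium configuration Q₁,...,Q_n (pairwise distinct, satisfying 𝐀²Q_i = Σ_{j≠i} m_j(Q_i - Q_j)‖Q_i - Q_j‖^{2a}) satisfies ‖Q_i‖ < C for all i; hence the set of relative equilibrium configurations is bounded. -/
open Real Finset Matrix Filter

namespace MUB


variable {k : ℕ}

lemma div2_lt (he : Even k) (i : Fin k) : (i : ℕ) / 2 < k / 2 := by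
  obtain ⟨mm, rfl⟩ := he
  have := i.isLt
  omega

lemma mulVecE_sq_apply (he : Even k) (A : Fin (k/2) → ℝ) (x : EuclideanSpace ℝ (Fin k))
    (i : Fin k) :
    mulVecE ((Amat k A)^2) x i = (A ⟨(i:ℕ)/2, div2_lt he i⟩)^2 * x i := by
  simp [mulVecE, Amat, pow_two, Matrix.diagonal_mul_diagonal, Matrix.mulVec_diagonal,
    div2_lt he i]

lemma inner_euc (x y : EuclideanSpace ℝ (Fin k)) : (inner ℝ x y : ℝ) = ∑ i, x i * y i := by
  rw [PiLp.inner_apply]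
  simp [RCLike.inner_apply, mul_comm]

noncomputable def TL (M : Matrix (Fin k) (Fin k) ℝ) :
    EuclideanSpace ℝ (Fin k) →ₗ[ℝ] EuclideanSpace ℝ (Fin k) where
  toFun := mulVecE M
  map_add' x y := by
    ext i
    simp [mulVecE, Matrix.mulVec, dotProduct, PiLp.add_apply, mul_add,
      Finset.sum_add_distrib]
  map_smul' c x := by
    ext i
    simp [mulVecE, Matrix.mulVec, dotProduct, PiLp.smul_apply, smul_eq_mul,
      Finset.mul_sum]
    exact Finset.sum_congr rfl fun j _ => by ring





lemma spectral_lower (he : Even k) (A : Fin (k/2) → ℝ) {α : ℝ} (hα0 : 0 ≤ α)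
    (hα : ∀ s, α ≤ A s) (x : EuclideanSpace ℝ (Fin k)) :
    α^2 * ‖x‖^2 ≤ (inner ℝ (mulVecE ((Amat k A)^2) x) x : ℝ) := by
  have h1 : (inner ℝ x x : ℝ) = ‖x‖^2 := real_inner_self_eq_norm_sq x
  rw [← h1, inner_euc, inner_euc, Finset.mul_sum]
  refine Finset.sum_le_sum fun i _ => ?_
  rw [mulVecE_sq_apply he]
  have h2 := hα ⟨(i:ℕ)/2, div2_lt he i⟩
  have h4 : α^2 ≤ (A ⟨(i:ℕ)/2, div2_lt he i⟩)^2 := by nlinarith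
  nlinarith [mul_le_mul_of_nonneg_right h4 (mul_self_nonneg (x i))]

lemma norm_T_le (he : Even k) (A : Fin (k/2) → ℝ) {β : ℝ} (hβ0 : 0 ≤ β)
    (hA : ∀ s, 0 ≤ A s) (hβ : ∀ s, A s ≤ β) (x : EuclideanSpace ℝ (Fin k)) :
    ‖mulVecE ((Amat k A)^2) x‖ ≤ β^2 * ‖x‖ := by
  have h1 : ‖mulVecE ((Amat k A)^2) x‖^2 ≤ (β^2 * ‖x‖)^2 := by
    rw [← real_inner_self_eq_norm_sq, inner_euc, mul_pow, ← real_inner_self_eq_norm_sq,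
      inner_euc, Finset.mul_sum]
    refine Finset.sum_le_sum fun i _ => ?_
    rw [mulVecE_sq_apply he]
    have h2 := hβ ⟨(i:ℕ)/2, div2_lt he i⟩
    have h3 := hA ⟨(i:ℕ)/2, div2_lt he i⟩
    have h5 : (A ⟨(i:ℕ)/2, div2_lt he i⟩)^2 ≤ β^2 := by nlinarith
    have h4 : ((A ⟨(i:ℕ)/2, div2_lt he i⟩)^2)^2 ≤ (β^2)^2 := by nlinarith [sq_nonneg (A ⟨(i:ℕ)/2, div2_lt he i⟩)]
    nlinarith [mul_le_mul_of_nonneg_right h4 (mul_self_nonneg (x i))]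
  exact (pow_le_pow_iff_left₀ (norm_nonneg _) (by positivity) two_ne_zero).mp h1





lemma cancel_sum {ι : Type*} {V : Type*} [AddCommGroup V] [Module ℝ V] (s : Finset ι)
    (F : ι → ι → V) (h : ∀ i j, F i j + F j i = 0) :
    ∑ p ∈ s ×ˢ s, F p.1 p.2 = 0 := by
  refine Finset.sum_involution (fun p _ => (p.2, p.1)) (fun p _ => h p.1 p.2)
    (fun p _ hF hswap => hF ?_) (fun p hp => ?_) (fun p hp => rfl)
  · have h2 : p.2 = p.1 := congrArg Prod.fst hswap
    rw [h2]
    have h3 := h p.1 p.1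
    have h4 : (2:ℝ) • F p.1 p.1 = 0 := by rw [two_smul]; exact h3
    simpa using (smul_eq_zero.mp h4).resolve_left (by norm_num)
  · simp only [Finset.mem_product] at hp ⊢
    exact ⟨hp.2, hp.1⟩

lemma sym_sum {ι : Type*} (s : Finset ι) (f : ι → ι → ℝ) :
    ∑ p ∈ s ×ˢ s, f p.1 p.2 = (1/2) * ∑ p ∈ s ×ˢ s, (f p.1 p.2 + f p.2 p.1) := by
  have hswap : ∑ p ∈ s ×ˢ s, f p.1 p.2 = ∑ p ∈ s ×ˢ s, f p.2 p.1 := by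
    refine Finset.sum_nbij' (fun p => (p.2, p.1)) (fun p => (p.2, p.1)) ?_ ?_ ?_ ?_ ?_ <;>
      simp +contextual [Finset.mem_product, and_comm]
  rw [Finset.sum_add_distrib, ← hswap]
  ring





lemma gap_lemma {n : ℕ} (g : Fin n → ℝ) (Λ d : ℝ) (hΛ : 1 ≤ Λ) (hd : 0 < d) :
    ∃ t ≤ n, ∀ i, g i ≤ Λ^t * d ∨ Λ^(t+1) * d < g i := by
  by_contra hcon
  push_neg at hcon
  choose f h1 h2 using hcon
  set F : Fin (n+1) → Fin n := fun t => f (t : ℕ) (by omega) with hF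
  have key : ∀ t t' : Fin (n+1), (t:ℕ) < (t':ℕ) → F t ≠ F t' := by
    intro t t' hlt heq
    have e1 : g (F t) ≤ Λ^((t:ℕ)+1) * d := h2 (t:ℕ) (by omega)
    have e2 : Λ^((t':ℕ)) * d < g (F t') := h1 (t':ℕ) (by omega)
    have e3 : Λ^((t:ℕ)+1) ≤ Λ^((t':ℕ)) := pow_le_pow_right₀ hΛ hlt
    rw [heq] at e1
    nlinarith [mul_le_mul_of_nonneg_right e3 hd.le]
  have hinj : Function.Injective F := by
    intro t t' heq
    by_contra hne
    have hne' : (t:ℕ) ≠ (t':ℕ) := fun hh => hne (Fin.ext hh)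
    rcases lt_or_gt_of_ne hne' with hlt | hlt
    · exact key t t' hlt heq
    · exact key t' t hlt heq.symm
  have hcard := Fintype.card_le_of_injective F hinj
  simp at hcard





lemma sum_sum_mul {ι κ : Type*} (s : Finset ι) (t : Finset κ) (f : ι → ℝ) (g : κ → ℝ) (X : ℝ) :
    ∑ i ∈ s, ∑ j ∈ t, f i * g j * X = (∑ i ∈ s, f i) * ((∑ j ∈ t, g j) * X) := by
  simp_rw [mul_assoc, ← Finset.mul_sum, ← Finset.sum_mul]

lemma eq_univ_form {k n : ℕ} (M2 : Matrix (Fin k) (Fin k) ℝ) (m : Fin n → ℝ) (a : ℝ)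
    (Q : Fin n → EuclideanSpace ℝ (Fin k)) (i : Fin n)
    (h : mulVecE M2 (Q i) =
      ∑ j ∈ Finset.univ.filter (· ≠ i), (m j * ‖Q i - Q j‖ ^ (2 * a)) • (Q i - Q j)) :
    TL M2 (Q i) = ∑ j ∈ Finset.univ, (m j * ‖Q i - Q j‖ ^ (2 * a)) • (Q i - Q j) := by
  have h0 : (m i * ‖Q i - Q i‖ ^ (2 * a)) • (Q i - Q i) = 0 := by simp
  rw [show TL M2 (Q i) = mulVecE M2 (Q i) from rfl, h, Finset.filter_ne']
  exact Finset.sum_erase _ h0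

lemma rpow_mul_sq {r e : ℝ} (hr : 0 ≤ r) (he : e + 2 ≠ 0) : r ^ e * r ^ 2 = r ^ (e + 2) := by
  rcases eq_or_lt_of_le hr with h0 | h0
  · rw [← h0, Real.zero_rpow he]
    simp
  · rw [show (r:ℝ)^(2:ℕ) = r ^ (2:ℝ) by rw [← Real.rpow_natCast r 2]; norm_num,
      ← Real.rpow_add h0]



lemma rpow_mul_sq' {r e : ℝ} (hr : 0 < r) : r ^ e * r ^ 2 = r ^ (e + 2) := by
  rw [show (r:ℝ)^(2:ℕ) = r ^ (2:ℝ) by rw [← Real.rpow_natCast r 2]; norm_num,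
    ← Real.rpow_add hr]
end MUB

open MUB

set_option maxHeartbeats 3000000 in
/-- Corollary: with `k` even (so `𝐀` invertible), relative equilibrium
configurations are uniformly bounded. -/
theorem main_upper_bound {k n : ℕ} (hk : Even k) (hn : 3 ≤ n) (A : Fin (k / 2) → ℝ)
    (hA : ∀ s, 0 < A s) (m : Fin n → ℝ) (hm : ∀ i, 0 < m i) (a : ℝ) (ha : a < -1/2) :
    ∃ C > (0 : ℝ), ∀ Q : Fin n → EuclideanSpace ℝ (Fin k),
      (∀ i j, i ≠ j → Q i ≠ Q j) →
      (∀ i, mulVecE ((Amat k A) ^ 2) (Q i) =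
        ∑ j ∈ Finset.univ.filter (· ≠ i), (m j * ‖Q i - Q j‖ ^ (2 * a)) • (Q i - Q j)) →
      ∀ i, ‖Q i‖ < C := by
  classical
  have hn0 : 0 < n := by omega
  have hi01 : (⟨0, by omega⟩ : Fin n) ≠ (⟨1, by omega⟩ : Fin n) := by
    simp [Fin.ext_iff]
  -- dispatch k = 0
  rcases Nat.eq_zero_or_pos k with hk0 | hkpos
  · subst hk0
    refine ⟨1, one_pos, fun Q hne hQ i => ?_⟩
    exfalso
    refine hne _ _ hi01 (PiLp.ext fun j => j.elim0)
  have hp : 0 < k / 2 := by obtain ⟨r, rfl⟩ := hk; omega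
  haveI hne1 : Nonempty (Fin (k/2)) := ⟨⟨0, hp⟩⟩
  haveI hne2 : Nonempty (Fin n) := ⟨⟨0, hn0⟩⟩
  set α := Finset.univ.inf' Finset.univ_nonempty A with hαdef
  set β := Finset.univ.sup' Finset.univ_nonempty A with hβdef
  have hα : ∀ s, α ≤ A s := fun s => Finset.inf'_le _ (Finset.mem_univ s)
  have hβ : ∀ s, A s ≤ β := fun s => Finset.le_sup' _ (Finset.mem_univ s)
  have hα0 : 0 < α := by
    rw [hαdef, Finset.lt_inf'_iff]
    exact fun s _ => hA s
  have hβ0 : 0 < β := lt_of_lt_of_le (hA (Classical.arbitrary _)) (hβ _)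
  set μ := Finset.univ.inf' Finset.univ_nonempty m with hμdef
  set M := ∑ i, m i with hMdef
  have hμ : ∀ i, μ ≤ m i := fun i => Finset.inf'_le _ (Finset.mem_univ i)
  have hμ0 : 0 < μ := by
    rw [hμdef, Finset.lt_inf'_iff]
    exact fun i _ => hm i
  have hM0 : 0 < M := Finset.sum_pos (fun i _ => hm i) Finset.univ_nonempty
  have hMl : ∀ i, m i ≤ M :=
    fun i => Finset.single_le_sum (fun j _ => (hm j).le) (Finset.mem_univ i)
  have h2a1 : 2*a + 1 < 0 := by linarith
  have h2a : 2*a < 0 := by linarith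
  set M2 := (Amat k A)^2 with hM2def
  rcases le_or_gt a (-1) with hacase | hacase
  · -- hard case a ≤ -1
    have h2a2 : 2*a + 2 ≤ 0 := by linarith
    have h2a1ne : (2*a+1 : ℝ) ≠ 0 := by linarith
    have h2ane : (2*a : ℝ) ≠ 0 := by linarith
    set CA := M^3/μ + M^2 with hCAdef
    set CB := β^2*M^2/μ + β^2*M with hCBdef
    have hCA0 : 0 < CA := by
      have h1 : 0 < M^3/μ := div_pos (pow_pos hM0 3) hμ0
      rw [hCAdef]
      nlinarith [pow_pos hM0 2]
    have hCB0 : 0 < CB := by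
      have h1 : 0 < β^2*M^2/μ := div_pos (mul_pos (pow_pos hβ0 2) (pow_pos hM0 2)) hμ0
      rw [hCBdef]
      nlinarith [mul_pos (pow_pos hβ0 2) hM0]
    have hden0 : (0:ℝ) < μ^2/(2*CA) := div_pos (pow_pos hμ0 2) (by linarith)
    set ρ := (μ^2/(2*CA)) ^ (2*a+1)⁻¹ with hρdef
    have hρ0 : 0 < ρ := Real.rpow_pos_of_pos hden0 _
    set Λ := ρ + 2 with hΛdef
    have hΛ1 : 1 ≤ Λ := by linarith
    have hΛm1 : 0 < Λ - 1 := by linarith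
    have hΛ0 : 0 < Λ := by linarith
    have hρpow : (Λ - 1) ^ (2*a+1) ≤ μ^2/(2*CA) := by
      have h1 : ρ ^ (2*a+1) = μ^2/(2*CA) := Real.rpow_inv_rpow hden0.le h2a1ne
      rw [← h1]
      exact Real.rpow_le_rpow_of_nonpos hρ0 (by linarith) (by linarith)
    have hnum0 : (0:ℝ) < 2*CB/μ^2 := div_pos (by linarith) (pow_pos hμ0 2)
    set c₀ := (2*CB/μ^2) ^ (2*a)⁻¹ with hc₀def
    have hc₀0 : 0 < c₀ := Real.rpow_pos_of_pos hnum0 _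
    set c := c₀ / Λ^n with hcdef
    have hc0 : 0 < c := div_pos hc₀0 (pow_pos hΛ0 n)
    have hCpos : 0 < M * c^(2*a+1) / α^2 :=
      div_pos (mul_pos hM0 (Real.rpow_pos_of_pos hc0 _)) (pow_pos hα0 2)
    refine ⟨M * c^(2*a+1) / α^2 + 1, by linarith, fun Q hne hQ i => ?_⟩
    set w : Fin n → Fin n → ℝ := fun i j => m j * ‖Q i - Q j‖ ^ (2*a) with hwdef
    have hQU : ∀ i, TL M2 (Q i) = ∑ j ∈ Finset.univ, w i j • (Q i - Q j) :=
      fun i => eq_univ_form M2 m a Q i (hQ i)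
    have hdist : ∀ i j : Fin n, i ≠ j → 0 < ‖Q i - Q j‖ := fun i j h => by
      rw [norm_pos_iff, sub_ne_zero]; exact hne i j h
    have hwnn : ∀ i j, 0 ≤ w i j :=
      fun i j => mul_nonneg (hm j).le (Real.rpow_nonneg (norm_nonneg _) _)
    have hterm : ∀ (i j : Fin n), j ≠ i →
        ‖w i j • (Q i - Q j)‖ = m j * ‖Q i - Q j‖^(2*a+1) := by
      intro i j hj
      rw [norm_smul, Real.norm_eq_abs, abs_of_nonneg (hwnn i j), hwdef, mul_assoc,
        ← Real.rpow_add_one (hdist i j hj.symm).ne']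
    -- the minimal distance
    set P := (Finset.univ ×ˢ Finset.univ).filter (fun p : Fin n × Fin n => p.1 ≠ p.2)
      with hPdef
    have hPne : P.Nonempty := ⟨(⟨0, by omega⟩, ⟨1, by omega⟩), by
      simp only [hPdef, Finset.mem_filter, Finset.mem_product, Finset.mem_univ, true_and]
      exact hi01⟩
    set d := P.inf' hPne (fun p => ‖Q p.1 - Q p.2‖) with hddef
    have hd0 : 0 < d := by
      rw [hddef, Finset.lt_inf'_iff]
      rintro ⟨i, j⟩ hp
      simp only [hPdef, Finset.mem_filter, Finset.mem_product] at hp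
      exact hdist i j hp.2
    have hdle : ∀ i j : Fin n, i ≠ j → d ≤ ‖Q i - Q j‖ := fun i j h =>
      Finset.inf'_le (b := (i, j)) _ (by
        simp only [hPdef, Finset.mem_filter, Finset.mem_product, Finset.mem_univ, true_and]
        exact h)
    obtain ⟨pm, hpmP, hdeq⟩ := Finset.exists_mem_eq_inf' hPne (fun p => ‖Q p.1 - Q p.2‖)
    set i₀ := pm.1 with hi₀def
    set j₀ := pm.2 with hj₀def
    have hij : i₀ ≠ j₀ := by
      have := hpmP
      simp only [hPdef, Finset.mem_filter, Finset.mem_product] at this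
      exact this.2
    have hdeq' : ‖Q i₀ - Q j₀‖ = d := hdeq.symm
    obtain ⟨t, htn, hgap⟩ := gap_lemma (fun i => ‖Q i - Q i₀‖) Λ d hΛ1 hd0
    set B := Λ^t * d with hBdef
    have hB0 : 0 < B := mul_pos (pow_pos hΛ0 t) hd0
    have hdB : d ≤ B := by
      have h1 : (1:ℝ) ≤ Λ^t := one_le_pow₀ hΛ1
      have h2 := mul_le_mul_of_nonneg_right h1 hd0.le
      linarith only [h2, hBdef]
    set K := Finset.univ.filter (fun i => ‖Q i - Q i₀‖ ≤ B) with hKdef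
    have hKmem : ∀ i₁, i₁ ∈ K ↔ ‖Q i₁ - Q i₀‖ ≤ B := fun i₁ => by
      simp [hKdef]
    have hi₀K : i₀ ∈ K := by rw [hKmem]; simp [hB0.le]
    have hj₀K : j₀ ∈ K := by rw [hKmem, norm_sub_rev, hdeq']; exact hdB
    set sd := (Λ - 1) * B with hsddef
    have hs0 : 0 < sd := mul_pos hΛm1 hB0
    have hsep : ∀ i₁ ∈ K, ∀ j, j ∉ K → sd < ‖Q i₁ - Q j‖ := by
      intro i₁ hi₁ j hj
      rw [hKmem] at hi₁ hj
      push_neg at hj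
      have h1 : Λ^(t+1) * d < ‖Q j - Q i₀‖ := by
        rcases hgap j with h | h
        · exact absurd h (by rw [hBdef] at hj; exact not_le.mpr hj)
        · exact h
      have h2 : Λ^(t+1) * d = Λ * B := by rw [hBdef, pow_succ]; ring
      have h3 : ‖Q j - Q i₀‖ ≤ ‖Q j - Q i₁‖ + ‖Q i₁ - Q i₀‖ := by
        have h4 := norm_add_le (Q j - Q i₁) (Q i₁ - Q i₀)
        rw [sub_add_sub_cancel] at h4
        exact h4
      have h5 : ‖Q j - Q i₁‖ = ‖Q i₁ - Q j‖ := norm_sub_rev _ _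
      rw [h5] at h3
      rw [hsddef]
      rw [h2] at h1
      linarith only [h1, h3, hi₁]
    have hsepr : ∀ i₁ ∈ K, ∀ j, j ∉ K → ‖Q i₁ - Q j‖^(2*a+1) ≤ sd^(2*a+1) :=
      fun i₁ hi₁ j hj =>
        Real.rpow_le_rpow_of_nonpos hs0 (hsep i₁ hi₁ j hj).le (by linarith)
    set F : Fin n → Fin n → EuclideanSpace ℝ (Fin k) :=
      fun i j => m i • (w i j • (Q i - Q j)) with hFdef
    have hFanti : ∀ i j, F i j + F j i = 0 := by
      intro i j
      simp only [hFdef, smul_smul, hwdef]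
      rw [norm_sub_rev (Q j), show Q j - Q i = -(Q i - Q j) from (neg_sub _ _).symm,
        smul_neg,
        show m j * (m i * ‖Q i - Q j‖ ^ (2*a)) = m i * (m j * ‖Q i - Q j‖ ^ (2*a)) by ring]
      exact add_neg_cancel _
    set Kc := Finset.univ.filter (fun j => ¬ (j ∈ K)) with hKcdef
    have hKuniv : Finset.univ.filter (fun j : Fin n => j ∈ K) = K := by
      ext j; simp [hKdef]
    have hKcM : ∀ i₁ ∈ K, ∀ j ∈ Kc, j ≠ i₁ := by
      intro i₁ hi₁ j hj
      rintro rfl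
      rw [hKcdef] at hj
      simp only [Finset.mem_filter] at hj
      exact hj.2 hi₁
    have hKM : ∑ i₁ ∈ K, m i₁ ≤ M :=
      Finset.sum_le_sum_of_subset_of_nonneg (Finset.subset_univ K) fun j _ _ => (hm j).le
    have hKcM' : ∑ j ∈ Kc, m j ≤ M :=
      Finset.sum_le_sum_of_subset_of_nonneg (Finset.subset_univ Kc) fun j _ _ => (hm j).le
    have hKnn : (0:ℝ) ≤ ∑ i₁ ∈ K, m i₁ := Finset.sum_nonneg fun j _ => (hm j).le
    have hKcnn : (0:ℝ) ≤ ∑ j ∈ Kc, m j := Finset.sum_nonneg fun j _ => (hm j).le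
    -- momentum balance
    have hmom : TL M2 (∑ i₁ ∈ K, m i₁ • Q i₁) = ∑ i₁ ∈ K, ∑ j ∈ Kc, F i₁ j := by
      rw [map_sum]
      have h1 : ∀ i₁ ∈ K, TL M2 (m i₁ • Q i₁) = ∑ j ∈ Finset.univ, F i₁ j := by
        intro i₁ _
        rw [_root_.map_smul, hQU i₁, Finset.smul_sum]
      rw [Finset.sum_congr rfl h1]
      have h2 : ∀ i₁ ∈ K, ∑ j ∈ Finset.univ, F i₁ j
          = ∑ j ∈ K, F i₁ j + ∑ j ∈ Kc, F i₁ j := by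
        intro i₁ _
        rw [← Finset.sum_filter_add_sum_filter_not Finset.univ (fun j => j ∈ K) (F i₁),
          hKuniv, hKcdef]
      rw [Finset.sum_congr rfl h2, Finset.sum_add_distrib]
      have h3 : ∑ i₁ ∈ K, ∑ j ∈ K, F i₁ j = 0 := by
        rw [← Finset.sum_product' (f := F)]
        exact cancel_sum K F hFanti
      rw [h3, zero_add]
    have hG : ‖∑ i₁ ∈ K, ∑ j ∈ Kc, F i₁ j‖ ≤ M * (M * sd^(2*a+1)) := by
      refine le_trans (norm_sum_le _ _) ?_
      refine le_trans (Finset.sum_le_sum (fun i₁ _ => norm_sum_le _ _)) ?_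
      have hFb : ∀ i₁ ∈ K, ∀ j ∈ Kc, ‖F i₁ j‖ ≤ m i₁ * m j * sd^(2*a+1) := by
        intro i₁ hi₁ j hj
        have hjK : j ∉ K := by
          rw [hKcdef] at hj; simp only [Finset.mem_filter] at hj; exact hj.2
        have hji : j ≠ i₁ := hKcM i₁ hi₁ j hj
        rw [hFdef, norm_smul, Real.norm_eq_abs, abs_of_nonneg (hm i₁).le, hterm i₁ j hji]
        rw [mul_assoc]
        refine mul_le_mul_of_nonneg_left ?_ (hm i₁).le
        exact mul_le_mul_of_nonneg_left (hsepr i₁ hi₁ j hjK) (hm j).le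
      refine le_trans (Finset.sum_le_sum (fun i₁ hi₁ =>
        Finset.sum_le_sum (fun j hj => hFb i₁ hi₁ j hj))) ?_
      rw [sum_sum_mul K Kc m m (sd^(2*a+1))]
      have hsnn : (0:ℝ) ≤ sd^(2*a+1) := Real.rpow_nonneg hs0.le _
      have h4 : (∑ j ∈ Kc, m j) * sd^(2*a+1) ≤ M * sd^(2*a+1) :=
        mul_le_mul_of_nonneg_right hKcM' hsnn
      refine mul_le_mul hKM h4 (by positivity) hM0.le
    set W := ∑ i₁ ∈ K, m i₁ • (Q i₁ - Q i₀) with hWdef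
    set mK := ∑ i₁ ∈ K, m i₁ with hmKdef
    have hqB : ∀ i₁ ∈ K, ‖Q i₁ - Q i₀‖ ≤ B := fun i₁ hi₁ => (hKmem i₁).mp hi₁
    have hWb : ‖W‖ ≤ M * B := by
      rw [hWdef]
      refine le_trans (norm_sum_le _ _) ?_
      have h5 : ∀ i₁ ∈ K, ‖m i₁ • (Q i₁ - Q i₀)‖ ≤ m i₁ * B := by
        intro i₁ hi₁
        rw [norm_smul, Real.norm_eq_abs, abs_of_nonneg (hm i₁).le]
        exact mul_le_mul_of_nonneg_left (hqB i₁ hi₁) (hm i₁).le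
      refine le_trans (Finset.sum_le_sum h5) ?_
      rw [← Finset.sum_mul]
      exact mul_le_mul_of_nonneg_right hKM hB0.le
    have hsplit : ∑ i₁ ∈ K, m i₁ • Q i₁ = mK • Q i₀ + W := by
      have h6 : ∀ i₁ ∈ K, m i₁ • Q i₁ = m i₁ • (Q i₁ - Q i₀) + m i₁ • Q i₀ := by
        intro i₁ _
        rw [← smul_add, sub_add_cancel]
      rw [Finset.sum_congr rfl h6, Finset.sum_add_distrib, hmKdef, Finset.sum_smul,
        ← hWdef, add_comm]
    have hmK : μ ≤ mK := le_trans (hμ i₀)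
      (Finset.single_le_sum (fun i₁ _ => (hm i₁).le) hi₀K)
    have hmK0 : 0 < mK := lt_of_lt_of_le hμ0 hmK
    have hTW : ‖TL M2 W‖ ≤ β^2 * ‖W‖ :=
      norm_T_le hk A hβ0.le (fun s => (hA s).le) hβ W
    have hT0 : ‖TL M2 (Q i₀)‖ ≤ (M * (M * sd^(2*a+1)) + β^2*(M*B)) / μ := by
      have h1 : mK • TL M2 (Q i₀) = (∑ i₁ ∈ K, ∑ j ∈ Kc, F i₁ j) - TL M2 W := by
        rw [← hmom, hsplit, map_add, _root_.map_smul, add_sub_cancel_right]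
      have h2 : mK * ‖TL M2 (Q i₀)‖ ≤ M * (M * sd^(2*a+1)) + β^2*(M*B) := by
        have h3 : ‖mK • TL M2 (Q i₀)‖ = mK * ‖TL M2 (Q i₀)‖ := by
          rw [norm_smul, Real.norm_eq_abs, abs_of_pos hmK0]
        rw [← h3, h1]
        refine le_trans (norm_sub_le _ _) ?_
        have h4 : β^2 * ‖W‖ ≤ β^2 * (M*B) :=
          mul_le_mul_of_nonneg_left hWb (by positivity)
        linarith only [hG, hTW, h4]
      rw [le_div_iff₀ hμ0]
      calc ‖TL M2 (Q i₀)‖ * μ ≤ ‖TL M2 (Q i₀)‖ * mK :=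
            mul_le_mul_of_nonneg_left hmK (norm_nonneg _)
        _ = mK * ‖TL M2 (Q i₀)‖ := mul_comm _ _
        _ ≤ _ := h2
    -- virial over the cluster
    set g2 : Fin n → Fin n → ℝ :=
      fun i j => m i * (w i j * (inner ℝ (Q i - Q j) (Q i - Q i₀) : ℝ)) with hg2def
    set E := ∑ i₁ ∈ K, m i₁ * (inner ℝ (TL M2 (Q i₁)) (Q i₁ - Q i₀) : ℝ) with hEdef
    have hEub : |E| ≤ M * (‖TL M2 (Q i₀)‖ * B + β^2 * B^2) := by
      have hbnd : (0:ℝ) ≤ ‖TL M2 (Q i₀)‖ * B + β^2 * B^2 := by positivity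
      refine le_trans (Finset.abs_sum_le_sum_abs _ _) ?_
      have h7 : ∀ i₁ ∈ K, |m i₁ * (inner ℝ (TL M2 (Q i₁)) (Q i₁ - Q i₀) : ℝ)|
          ≤ m i₁ * (‖TL M2 (Q i₀)‖ * B + β^2 * B^2) := by
        intro i₁ hi₁
        rw [abs_mul, abs_of_nonneg (hm i₁).le]
        refine mul_le_mul_of_nonneg_left ?_ (hm i₁).le
        have h8 : TL M2 (Q i₁) = TL M2 (Q i₀) + TL M2 (Q i₁ - Q i₀) := by
          rw [← map_add]
          congr 1
          abel
        rw [h8, inner_add_left]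
        refine le_trans (abs_add_le _ _) ?_
        have h9 : |(inner ℝ (TL M2 (Q i₀)) (Q i₁ - Q i₀) : ℝ)| ≤ ‖TL M2 (Q i₀)‖ * B := by
          refine le_trans (abs_real_inner_le_norm _ _) ?_
          exact mul_le_mul_of_nonneg_left (hqB i₁ hi₁) (norm_nonneg _)
        have h10 : |(inner ℝ (TL M2 (Q i₁ - Q i₀)) (Q i₁ - Q i₀) : ℝ)| ≤ β^2 * B^2 := by
          refine le_trans (abs_real_inner_le_norm _ _) ?_
          have h11 : ‖TL M2 (Q i₁ - Q i₀)‖ ≤ β^2 * ‖Q i₁ - Q i₀‖ :=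
            norm_T_le hk A hβ0.le (fun s => (hA s).le) hβ _
          have h12 := hqB i₁ hi₁
          have h13 := norm_nonneg (Q i₁ - Q i₀)
          have h14 : ‖TL M2 (Q i₁ - Q i₀)‖ * ‖Q i₁ - Q i₀‖ ≤ (β^2 * B) * B :=
            mul_le_mul (le_trans h11 (mul_le_mul_of_nonneg_left h12 (sq_nonneg β)))
              h12 h13 (by positivity)
          calc ‖TL M2 (Q i₁ - Q i₀)‖ * ‖Q i₁ - Q i₀‖ ≤ (β^2 * B) * B := h14
            _ = β^2 * B^2 := by ring
        linarith only [h9, h10]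
      refine le_trans (Finset.sum_le_sum h7) ?_
      rw [← Finset.sum_mul]
      exact mul_le_mul_of_nonneg_right hKM hbnd
    have hEdecomp : E = ∑ i₁ ∈ K, ∑ j ∈ K, g2 i₁ j + ∑ i₁ ∈ K, ∑ j ∈ Kc, g2 i₁ j := by
      rw [hEdef]
      have h1 : ∀ i₁ ∈ K, m i₁ * (inner ℝ (TL M2 (Q i₁)) (Q i₁ - Q i₀) : ℝ)
          = ∑ j ∈ Finset.univ, g2 i₁ j := by
        intro i₁ _
        rw [hQU i₁, sum_inner, Finset.mul_sum]
        exact Finset.sum_congr rfl fun j _ => by rw [real_inner_smul_left, hg2def]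
      rw [Finset.sum_congr rfl h1]
      have h2 : ∀ i₁ ∈ K, ∑ j ∈ Finset.univ, g2 i₁ j
          = ∑ j ∈ K, g2 i₁ j + ∑ j ∈ Kc, g2 i₁ j := by
        intro i₁ _
        rw [← Finset.sum_filter_add_sum_filter_not Finset.univ (fun j => j ∈ K) (g2 i₁),
          hKuniv, hKcdef]
      rw [Finset.sum_congr rfl h2, Finset.sum_add_distrib]
    have hExt : |∑ i₁ ∈ K, ∑ j ∈ Kc, g2 i₁ j| ≤ M * (M * (sd^(2*a+1) * B)) := by
      refine le_trans (Finset.abs_sum_le_sum_abs _ _) ?_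
      refine le_trans (Finset.sum_le_sum (fun i₁ _ => Finset.abs_sum_le_sum_abs _ _)) ?_
      have hgb : ∀ i₁ ∈ K, ∀ j ∈ Kc, |g2 i₁ j| ≤ m i₁ * m j * (sd^(2*a+1) * B) := by
        intro i₁ hi₁ j hj
        have hjK : j ∉ K := by
          rw [hKcdef] at hj; simp only [Finset.mem_filter] at hj; exact hj.2
        have hji : j ≠ i₁ := hKcM i₁ hi₁ j hj
        have habs : |g2 i₁ j|
            = m i₁ * (w i₁ j * |(inner ℝ (Q i₁ - Q j) (Q i₁ - Q i₀) : ℝ)|) := by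
          rw [hg2def, abs_mul, abs_of_nonneg (hm i₁).le, abs_mul,
            abs_of_nonneg (hwnn i₁ j)]
        have h1 : |(inner ℝ (Q i₁ - Q j) (Q i₁ - Q i₀) : ℝ)| ≤ ‖Q i₁ - Q j‖ * B := by
          refine le_trans (abs_real_inner_le_norm _ _) ?_
          exact mul_le_mul_of_nonneg_left (hqB i₁ hi₁) (norm_nonneg _)
        have h2 : w i₁ j * (‖Q i₁ - Q j‖ * B) = m j * (‖Q i₁ - Q j‖^(2*a+1) * B) := by
          simp only [hwdef]
          rw [Real.rpow_add_one (hdist i₁ j hji.symm).ne' (2*a)]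
          ring
        have hinner : w i₁ j * |(inner ℝ (Q i₁ - Q j) (Q i₁ - Q i₀) : ℝ)|
            ≤ m j * (sd^(2*a+1) * B) := by
          calc w i₁ j * |(inner ℝ (Q i₁ - Q j) (Q i₁ - Q i₀) : ℝ)|
              ≤ w i₁ j * (‖Q i₁ - Q j‖ * B) :=
                mul_le_mul_of_nonneg_left h1 (hwnn i₁ j)
            _ = m j * (‖Q i₁ - Q j‖^(2*a+1) * B) := h2
            _ ≤ m j * (sd^(2*a+1) * B) := by
                refine mul_le_mul_of_nonneg_left ?_ (hm j).le
                exact mul_le_mul_of_nonneg_right (hsepr i₁ hi₁ j hjK) hB0.le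
        calc |g2 i₁ j| = m i₁ * (w i₁ j * |(inner ℝ (Q i₁ - Q j) (Q i₁ - Q i₀) : ℝ)|) :=
              habs
          _ ≤ m i₁ * (m j * (sd^(2*a+1) * B)) :=
              mul_le_mul_of_nonneg_left hinner (hm i₁).le
          _ = m i₁ * m j * (sd^(2*a+1) * B) := by ring
      refine le_trans (Finset.sum_le_sum (fun i₁ hi₁ =>
        Finset.sum_le_sum (fun j hj => hgb i₁ hi₁ j hj))) ?_
      rw [sum_sum_mul K Kc m m (sd^(2*a+1) * B)]
      have hsnn : (0:ℝ) ≤ sd^(2*a+1) * B := mul_nonneg (Real.rpow_nonneg hs0.le _) hB0.le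
      have h4 : (∑ j ∈ Kc, m j) * (sd^(2*a+1) * B) ≤ M * (sd^(2*a+1) * B) :=
        mul_le_mul_of_nonneg_right hKcM' hsnn
      refine mul_le_mul hKM h4 (by positivity) hM0.le
    have hg2sym : ∀ i j : Fin n, g2 i j + g2 j i
        = m i * m j * (‖Q i - Q j‖ ^ (2*a) * ‖Q i - Q j‖^2) := by
      intro i j
      have h1 : ‖Q j - Q i‖ = ‖Q i - Q j‖ := norm_sub_rev _ _
      have h2 : (inner ℝ (Q j - Q i) (Q j - Q i₀) : ℝ)
          = -(inner ℝ (Q i - Q j) (Q j - Q i₀) : ℝ) := by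
        rw [show Q j - Q i = -(Q i - Q j) from (neg_sub _ _).symm, inner_neg_left]
      have h3 : (inner ℝ (Q i - Q j) (Q i - Q i₀) : ℝ)
          - (inner ℝ (Q i - Q j) (Q j - Q i₀) : ℝ) = ‖Q i - Q j‖^2 := by
        rw [← inner_sub_right, show (Q i - Q i₀) - (Q j - Q i₀) = Q i - Q j by abel,
          real_inner_self_eq_norm_sq]
      simp only [hg2def, hwdef, h1, h2]
      linear_combination (m i * m j * ‖Q i - Q j‖^(2*a)) * h3
    have hInt : μ^2 * (d^(2*a) * d^2) ≤ ∑ i₁ ∈ K, ∑ j ∈ K, g2 i₁ j := by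
      rw [← Finset.sum_product' (f := g2), sym_sum K g2]
      have hnn : ∀ p ∈ K ×ˢ K, (0:ℝ) ≤ g2 p.1 p.2 + g2 p.2 p.1 := by
        rintro ⟨i1, j1⟩ -
        rw [hg2sym i1 j1]
        have h0 := Real.rpow_nonneg (norm_nonneg (Q i1 - Q j1)) (2*a)
        exact mul_nonneg (mul_nonneg (hm i1).le (hm j1).le)
          (mul_nonneg h0 (sq_nonneg _))
      have hpairne : ((i₀, j₀) : Fin n × Fin n) ≠ (j₀, i₀) := by
        intro h
        exact hij (congrArg Prod.fst h)
      have hsub : ({(i₀, j₀), (j₀, i₀)} : Finset (Fin n × Fin n)) ⊆ K ×ˢ K := by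
        intro p hp
        simp only [Finset.mem_insert, Finset.mem_singleton] at hp
        rcases hp with rfl | rfl <;> simp [Finset.mem_product, hi₀K, hj₀K]
      have hle := Finset.sum_le_sum_of_subset_of_nonneg hsub
        (fun p hp _ => hnn p hp)
      rw [Finset.sum_pair hpairne] at hle
      have hv1 : g2 (i₀, j₀).1 (i₀, j₀).2 + g2 (i₀, j₀).2 (i₀, j₀).1
          = m i₀ * m j₀ * (d^(2*a) * d^2) := by
        rw [hg2sym i₀ j₀, hdeq']
      have hv2 : g2 (j₀, i₀).1 (j₀, i₀).2 + g2 (j₀, i₀).2 (j₀, i₀).1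
          = m j₀ * m i₀ * (d^(2*a) * d^2) := by
        rw [hg2sym j₀ i₀, norm_sub_rev, hdeq']
      have hdnn : (0:ℝ) ≤ d^(2*a) * d^2 := by positivity
      have hμμ : μ * μ ≤ m i₀ * m j₀ :=
        mul_le_mul (hμ i₀) (hμ j₀) hμ0.le (hm i₀).le
      rw [hv1, hv2] at hle
      have h15 := mul_le_mul_of_nonneg_right hμμ hdnn
      have h16 : (0:ℝ) ≤ μ^2 * (d^(2*a) * d^2) := mul_nonneg (by positivity) hdnn
      clear_value d μ
      linarith only [hle, h15, h16]
    -- combine all the estimates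
    have hIntUb : μ^2 * (d^(2*a) * d^2)
        ≤ M * (‖TL M2 (Q i₀)‖ * B + β^2 * B^2) + M * (M * (sd^(2*a+1) * B)) := by
      have h1 : ∑ i₁ ∈ K, ∑ j ∈ K, g2 i₁ j = E - ∑ i₁ ∈ K, ∑ j ∈ Kc, g2 i₁ j := by
        rw [hEdecomp]; ring
      have h2 := hInt
      rw [h1] at h2
      linarith only [h2, le_abs_self E, neg_le_abs (∑ i₁ ∈ K, ∑ j ∈ Kc, g2 i₁ j),
        hEub, hExt]
    have hT0B : M * (‖TL M2 (Q i₀)‖ * B + β^2 * B^2)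
        ≤ M * (((M * (M * sd^(2*a+1)) + β^2*(M*B)) / μ) * B + β^2 * B^2) := by
      refine mul_le_mul_of_nonneg_left ?_ hM0.le
      have h3 := mul_le_mul_of_nonneg_right hT0 hB0.le
      linarith only [h3]
    set u := B^(2*a) with hudef
    have hu0 : 0 < u := Real.rpow_pos_of_pos hB0 _
    set v := (Λ-1)^(2*a+1) with hvdef
    have hv0 : 0 < v := Real.rpow_pos_of_pos hΛm1 _
    have hf1 : sd^(2*a+1) = v * (u * B) := by
      rw [hvdef, hudef, hsddef, Real.mul_rpow hΛm1.le hB0.le,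
        Real.rpow_add_one (x := B) hB0.ne' (2*a)]
    have hf2 : u * B^2 ≤ d^(2*a) * d^2 := by
      have e1 : u * B^2 = B^(2*a+2) := by rw [hudef]; exact rpow_mul_sq' hB0
      have e2 : d^(2*a) * d^2 = d^(2*a+2) := rpow_mul_sq' hd0
      rw [e1, e2]
      exact Real.rpow_le_rpow_of_nonpos hd0 hdB h2a2
    have hCAv : CA * v ≤ μ^2/2 := by
      rw [hvdef]
      have h1 : CA * ((Λ-1)^(2*a+1)) ≤ CA * (μ^2/(2*CA)) :=
        mul_le_mul_of_nonneg_left hρpow hCA0.le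
      have h2 : CA * (μ^2/(2*CA)) = μ^2/2 := by
        field_simp
      linarith only [h1, h2]
    have hmain : μ^2 * (u * B^2) ≤ CA * (v * (u * B^2)) + CB * B^2 := by
      have hμne : μ ≠ 0 := hμ0.ne'
      calc μ^2*(u*B^2) ≤ μ^2*(d^(2*a)*d^2) :=
            mul_le_mul_of_nonneg_left hf2 (by positivity)
        _ ≤ M * (((M * (M * sd^(2*a+1)) + β^2*(M*B)) / μ) * B + β^2 * B^2)
            + M * (M * (sd^(2*a+1) * B)) := by linarith only [hIntUb, hT0B]
        _ = CA * (v * (u * B^2)) + CB * B^2 := by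
            rw [hf1, hCAdef, hCBdef]
            field_simp
            ring
    have hu2 : u ≤ 2*CB/μ^2 := by
      have hq : (0:ℝ) < B^2 := pow_pos hB0 2
      clear_value u v B CB CA μ
      have h1 : CA * (v*(u*B^2)) ≤ (μ^2/2) * (u*B^2) := by
        have h1a := mul_le_mul_of_nonneg_right hCAv (le_of_lt (mul_pos hu0 hq))
        calc CA * (v*(u*B^2)) = (CA * v) * (u*B^2) := by ring
          _ ≤ (μ^2/2) * (u*B^2) := h1a
      have h2 : (μ^2/2) * u * B^2 ≤ CB * B^2 := by linarith only [hmain, h1]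
      have h3 := le_of_mul_le_mul_right h2 hq
      rw [le_div_iff₀ (pow_pos hμ0 2)]
      linarith only [h3]
    have hBc₀ : c₀ ≤ B := by
      have h1 : B^(2*a) ≤ c₀^(2*a) := by
        rw [hc₀def, Real.rpow_inv_rpow hnum0.le h2ane]
        exact hu2
      exact (Real.rpow_le_rpow_iff_of_neg hB0 hc₀0 (by linarith : 2*a < 0)).mp h1
    have hcd : c ≤ d := by
      have h1 : Λ^t ≤ Λ^n := pow_le_pow_right₀ hΛ1 htn
      have hΛn0 : (0:ℝ) < Λ^n := pow_pos hΛ0 n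
      rw [hcdef, div_le_iff₀ hΛn0]
      calc c₀ ≤ B := hBc₀
        _ = Λ^t * d := hBdef
        _ ≤ Λ^n * d := mul_le_mul_of_nonneg_right h1 hd0.le
        _ = d * Λ^n := mul_comm _ _
    -- conclude
    have hcr : ∀ i1 j1 : Fin n, i1 ≠ j1 → ‖Q i1 - Q j1‖^(2*a+1) ≤ c^(2*a+1) :=
      fun i1 j1 h =>
        Real.rpow_le_rpow_of_nonpos hc0 (le_trans hcd (hdle i1 j1 h)) (by linarith)
    have hTb : ‖mulVecE M2 (Q i)‖ ≤ M * c^(2*a+1) := by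
      rw [show mulVecE M2 (Q i) = TL M2 (Q i) from rfl, hQU i]
      refine le_trans (norm_sum_le _ _) ?_
      have h1 : ∀ j ∈ (Finset.univ : Finset (Fin n)),
          ‖w i j • (Q i - Q j)‖ ≤ m j * c^(2*a+1) := by
        intro j _
        rcases eq_or_ne j i with rfl | hj
        · simp only [sub_self, smul_zero, norm_zero]
          exact mul_nonneg (hm j).le (Real.rpow_nonneg hc0.le _)
        · rw [hterm i j hj]
          exact mul_le_mul_of_nonneg_left (hcr i j hj.symm) (hm j).le
      refine le_trans (Finset.sum_le_sum h1) ?_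
      rw [← Finset.sum_mul]
    have hfin1 : α^2 * ‖Q i‖^2 ≤ M * c^(2*a+1) * ‖Q i‖ := by
      have h1 := spectral_lower hk A hα0.le hα (Q i)
      have h2 := real_inner_le_norm (mulVecE M2 (Q i)) (Q i)
      have h3 := mul_le_mul_of_nonneg_right hTb (norm_nonneg (Q i))
      linarith only [h1, h2, h3]
    have hQile : ‖Q i‖ ≤ M * c^(2*a+1)/α^2 := by
      rcases eq_or_lt_of_le (norm_nonneg (Q i)) with h0 | h0
      · rw [← h0]; exact le_of_lt hCpos
      · rw [le_div_iff₀ (pow_pos hα0 2)]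
        have h4 : (α^2 * ‖Q i‖) * ‖Q i‖ ≤ (M * c^(2*a+1)) * ‖Q i‖ := by
          linarith only [hfin1]
        have h5 := le_of_mul_le_mul_right h4 h0
        linarith only [h5]
    linarith only [hQile, hCpos]

  · -- easy case : -1 < a < -1/2
    have h2a2 : 0 < 2*a + 2 := by linarith
    set c₁ := 2 ^ (2*a+1) * M^2 / (μ * α^2) with hc₁def
    have hc₁0 : 0 < c₁ := by
      apply div_pos
      · exact mul_pos (Real.rpow_pos_of_pos two_pos _) (by positivity)
      · positivity
    refine ⟨c₁ ^ (-(2*a))⁻¹ + 1, by positivity, fun Q hne hQ i => ?_⟩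
    obtain ⟨im, _, him⟩ := Finset.exists_max_image Finset.univ (fun i => ‖Q i‖)
      Finset.univ_nonempty
    set R := ‖Q im‖ with hRdef
    have hiR : ∀ j, ‖Q j‖ ≤ R := fun j => him j (Finset.mem_univ j)
    have hRC : R ≤ c₁ ^ (-(2*a))⁻¹ := by
      rcases eq_or_lt_of_le (norm_nonneg (Q im) : (0:ℝ) ≤ R) with hR0 | hR0
      · rw [hRdef, ← hR0]
        positivity
      have h2a2' : (2*a+2 : ℝ) ≠ 0 := by linarith
      set g : Fin n → Fin n → ℝ :=
        fun i j => m i * ((m j * ‖Q i - Q j‖ ^ (2*a)) * (inner ℝ (Q i - Q j) (Q i) : ℝ))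
          with hgdef
      have hgsym : ∀ i j : Fin n, g i j + g j i
          = m i * m j * (‖Q i - Q j‖ ^ (2*a) * ‖Q i - Q j‖^2) := by
        intro i j
        have h1 : ‖Q j - Q i‖ = ‖Q i - Q j‖ := norm_sub_rev _ _
        have h2 : (inner ℝ (Q j - Q i) (Q j) : ℝ) = -(inner ℝ (Q i - Q j) (Q j) : ℝ) := by
          rw [show Q j - Q i = -(Q i - Q j) from (neg_sub _ _).symm, inner_neg_left]
        have h3 : (inner ℝ (Q i - Q j) (Q i) : ℝ) - (inner ℝ (Q i - Q j) (Q j) : ℝ)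
            = ‖Q i - Q j‖^2 := by
          rw [← inner_sub_right, real_inner_self_eq_norm_sq]
        simp only [hgdef, h1, h2]
        linear_combination (m i * m j * ‖Q i - Q j‖^(2*a)) * h3
      have hQU : ∀ i, TL M2 (Q i)
          = ∑ j ∈ Finset.univ, (m j * ‖Q i - Q j‖ ^ (2 * a)) • (Q i - Q j) :=
        fun i => eq_univ_form M2 m a Q i (hQ i)
      have hTg : ∀ i, m i * (inner ℝ (TL M2 (Q i)) (Q i) : ℝ) = ∑ j, g i j := by
        intro i
        rw [hQU i, sum_inner, Finset.mul_sum]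
        exact Finset.sum_congr rfl fun j _ => by rw [real_inner_smul_left, hgdef]
      set X := 2^(2*a+2) * R^(2*a+2) with hXdef
      have hE1 : α^2*μ*R^2 ≤ ∑ i, m i * (inner ℝ (TL M2 (Q i)) (Q i) : ℝ) := by
        have hnn : ∀ i ∈ Finset.univ, 0 ≤ m i * (inner ℝ (TL M2 (Q i)) (Q i) : ℝ) := by
          intro i _
          have hs := spectral_lower hk A hα0.le hα (Q i)
          have : (0:ℝ) ≤ α^2 * ‖Q i‖^2 := by positivity
          exact mul_nonneg (hm i).le (by exact le_trans this hs)
        have hsingle := Finset.single_le_sum hnn (Finset.mem_univ im)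
        have hs := spectral_lower hk A hα0.le hα (Q im)
        have hmul : μ * (α^2 * R^2) ≤ m im * (inner ℝ (TL M2 (Q im)) (Q im) : ℝ) := by
          refine mul_le_mul (hμ im) ?_ (by positivity) (hm im).le
          exact hs
        nlinarith [hsingle, hmul]
      have hE2 : ∑ i, m i * (inner ℝ (TL M2 (Q i)) (Q i) : ℝ) ≤ 1/2 * (M * (M * X)) := by
        rw [Finset.sum_congr rfl (fun i _ => hTg i), ← Finset.sum_product', sym_sum]
        have hb : ∀ p ∈ Finset.univ ×ˢ Finset.univ,
            g p.1 p.2 + g p.2 p.1 ≤ m p.1 * m p.2 * X := by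
          rintro ⟨i, j⟩ -
          rw [hgsym i j]
          have hr1 : ‖Q i - Q j‖ ^ (2*a) * ‖Q i - Q j‖^2 ≤ X := by
            rw [rpow_mul_sq (norm_nonneg _) h2a2', hXdef, ← Real.mul_rpow (by norm_num)
              hR0.le]
            refine Real.rpow_le_rpow (norm_nonneg _) ?_ (by linarith)
            calc ‖Q i - Q j‖ ≤ ‖Q i‖ + ‖Q j‖ := norm_sub_le _ _
              _ ≤ 2 * R := by have := hiR i; have := hiR j; linarith
          exact mul_le_mul_of_nonneg_left hr1 (mul_nonneg (hm i).le (hm j).le)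
        have hprod : ∑ p ∈ Finset.univ ×ˢ Finset.univ, m p.1 * m p.2 * X = M * (M * X) := by
          rw [Finset.sum_product (f := fun p => m p.1 * m p.2 * X)]
          exact sum_sum_mul _ _ _ _ _
        have hfin := (Finset.sum_le_sum hb).trans (le_of_eq hprod)
        linarith
      -- combine
      have hpos : (0:ℝ) < R^(2*a+2) := Real.rpow_pos_of_pos hR0 _
      have hRsq : (R:ℝ)^2 = R^(2*a+2) * R^(-(2*a)) := by
        rw [← Real.rpow_add hR0, show (2*a+2) + -(2*a) = ((2:ℕ):ℝ) by push_cast; ring,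
          Real.rpow_natCast]
      have hX : 1/2 * (M * (M * X)) = 2^(2*a+1) * M^2 * R^(2*a+2) := by
        rw [hXdef, show (2*a+2 : ℝ) = (2*a+1) + 1 by ring, Real.rpow_add_one two_ne_zero]
        ring
      have hkey : α^2*μ*(R^(2*a+2) * R^(-(2*a))) ≤ 2^(2*a+1) * M^2 * R^(2*a+2) := by
        rw [← hRsq, ← hX]
        exact le_trans hE1 hE2
      have h6 : R^(-(2*a)) ≤ c₁ := by
        rw [hc₁def, le_div_iff₀ (by positivity)]
        have := le_of_mul_le_mul_right (by linear_combination hkey :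
          R^(-(2*a)) * (μ * α^2) * R^(2*a+2) ≤ 2^(2*a+1) * M^2 * R^(2*a+2)) hpos
        linarith
      have h7 := Real.rpow_le_rpow (Real.rpow_nonneg hR0.le _) h6
        (by rw [inv_nonneg]; linarith : (0:ℝ) ≤ (-(2*a))⁻¹)
      rwa [Real.rpow_rpow_inv hR0.le (by linarith : -(2*a) ≠ 0)] at h7
    calc ‖Q i‖ ≤ R := hiR i
      _ < c₁ ^ (-(2*a))⁻¹ + 1 := by linarith
end

section
/- Suppose a < -1/2 and for sequences of configurations Q_{1r},...,Q_{lr} all mutual distances ‖Q_{ir} - Q_{jr}‖ → 0 as r → ∞, with ‖Q_{1r} - Q_{lr}‖ maximal among these distances for each r. If the Q_{ir} additionally satisfy the relative equilibrium criterion with fixed masses m_i > 0 and fixed 𝐀, and the distances to the remaining bodies Q_{(l+1)r},...,Q_{nr} stay bounded below, then the inner product of both sides of the identity 𝐀²Σ_{i=2}^l m_i(Q_{1r} - Q_{ir}) = (Σ_{i=1}^l m_i)Σ_{j=2}^l m_j(Q_{1r}-Q_{jr})‖Q_{1r}-Q_{jr}‖^{2a} + Σ_{i=2}^l m_i(R_{1l,r}-R_{il,r})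 with the unit vector (Q_{1r}-Q_{lr})/‖Q_{1r}-Q_{lr}‖ yields a contradiction: the left side is bounded while the right side tends to +∞. -/
open Real Finset Matrix Filter

/-- the contradiction at the heart of the proof of the main theorem:
there is no sequence of relative equilibria in which a cluster of bodies `1,...,l`
collapses while staying uniformly away from the remaining bodies. -/
theorem no_collapsing_sequence {k n : ℕ} (A : Fin (k / 2) → ℝ) (hA : ∀ s, 0 < A s)
    (m : ℕ → ℝ) (hm : ∀ i ∈ Finset.Icc 1 n, 0 < m i) (a : ℝ) (ha : a < -1/2)
    (l : ℕ) (hl2 : 2 ≤ l) (hln : l ≤ n)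
    (Q : ℕ → ℕ → EuclideanSpace ℝ (Fin k))
    -- each configuration consists of pairwise distinct points
    (hdistinct : ∀ r, ∀ i ∈ Finset.Icc 1 n, ∀ j ∈ Finset.Icc 1 n, i ≠ j → Q r i ≠ Q r j)
    -- each configuration satisfies the relative equilibrium criterion
    (hcrit : ∀ r, ∀ i ∈ Finset.Icc 1 n, mulVecE ((Amat k A) ^ 2) (Q r i) =
      ∑ j ∈ (Finset.Icc 1 n).erase i, (m j * ‖Q r i - Q r j‖ ^ (2 * a)) • (Q r i - Q r j))
    -- all mutual distances within the cluster `{1,...,l}` tend to `0`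
    (hcollapse : ∀ i ∈ Finset.Icc 1 l, ∀ j ∈ Finset.Icc 1 l,
      Filter.Tendsto (fun r => ‖Q r i - Q r j‖) Filter.atTop (nhds 0))
    -- `‖Q_{1r} - Q_{lr}‖` is maximal among the cluster distances
    (hmax : ∀ r, ∀ i ∈ Finset.Icc 1 l, ∀ j ∈ Finset.Icc 1 l,
      ‖Q r i - Q r j‖ ≤ ‖Q r 1 - Q r l‖)
    -- the distances to the remaining bodies stay bounded below
    (δ : ℝ) (hδ : 0 < δ)
    (hfar : ∀ r, ∀ i ∈ Finset.Icc 1 l, ∀ j ∈ Finset.Icc (l + 1) n, δ ≤ ‖Q r i - Q r j‖) :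
    False := by
  classical
  set M : Matrix (Fin k) (Fin k) ℝ := (Amat k A) ^ 2 with hMdef
  -- membership facts
  have h1C : (1 : ℕ) ∈ Finset.Icc 1 l := by simp [Finset.mem_Icc]; omega
  have hlC : l ∈ Finset.Icc 1 l := by simp [Finset.mem_Icc]; omega
  have hCI : ∀ i ∈ Finset.Icc 1 l, i ∈ Finset.Icc 1 n := by
    intro i hi; simp [Finset.mem_Icc] at hi ⊢; omega
  have hFI : ∀ j ∈ Finset.Icc (l + 1) n, j ∈ Finset.Icc 1 n := by
    intro j hj; simp [Finset.mem_Icc] at hj ⊢; omega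
  have h1I : (1 : ℕ) ∈ Finset.Icc 1 n := hCI 1 h1C
  have hlI : l ∈ Finset.Icc 1 n := hCI l hlC
  have h1l : (1 : ℕ) ≠ l := by omega
  -- the matrix as a continuous linear map
  let f : EuclideanSpace ℝ (Fin k) →ₗ[ℝ] EuclideanSpace ℝ (Fin k) :=
    { toFun := fun x => mulVecE M x
      map_add' := fun x y => by
        show WithLp.toLp 2 (M.mulVec (WithLp.ofLp (x + y))) =
          WithLp.toLp 2 (M.mulVec (WithLp.ofLp x)) + WithLp.toLp 2 (M.mulVec (WithLp.ofLp y))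
        rw [WithLp.ofLp_add, M.mulVec_add, WithLp.toLp_add]
      map_smul' := fun c x => by
        show WithLp.toLp 2 (M.mulVec (WithLp.ofLp (c • x))) =
          c • WithLp.toLp 2 (M.mulVec (WithLp.ofLp x))
        rw [WithLp.ofLp_smul, M.mulVec_smul, WithLp.toLp_smul] }
  let F := LinearMap.toContinuousLinearMap f
  set K : ℝ := ‖F‖ with hKdef
  have hK0 : 0 ≤ K := norm_nonneg _
  have hFbound : ∀ x, ‖mulVecE M x‖ ≤ K * ‖x‖ := fun x => F.le_opNorm x
  have hFsub : ∀ x y, mulVecE M x - mulVecE M y = mulVecE M (x - y) := by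
    intro x y; exact (map_sub f x y).symm
  -- constants
  set B₀ : ℝ := (∑ j ∈ Finset.Icc (l + 1) n, m j) * δ ^ (2 * a + 1) with hB₀def
  have hB₀0 : 0 ≤ B₀ := by
    apply mul_nonneg
    · exact Finset.sum_nonneg fun j hj => (hm j (hFI j hj)).le
    · exact (Real.rpow_pos_of_pos hδ _).le
  have hml : 0 < m l := hm l hlI
  have hexp : 2 * a + 1 ≤ 0 := by linarith
  -- positivity of the distances
  have hτpos : ∀ r, 0 < ‖Q r 1 - Q r l‖ := by
    intro r
    rw [norm_pos_iff, sub_ne_zero]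
    exact hdistinct r 1 h1I l hlI h1l
  -- the main inequality, for each r
  have main : ∀ r, m l * ‖Q r 1 - Q r l‖ ^ (2 * a + 1) ≤ K * ‖Q r 1 - Q r l‖ + 2 * B₀ := by
    intro r
    set d : EuclideanSpace ℝ (Fin k) := Q r 1 - Q r l with hd
    set τ : ℝ := ‖d‖ with hτ
    have hτp : 0 < τ := hτpos r
    -- the scalar pairwise terms
    set g : ℕ → ℕ → ℝ := fun i j =>
      m j * (‖Q r i - Q r j‖ ^ (2 * a) * (inner ℝ (Q r i - Q r j) d : ℝ)) with hg
    have key : ∀ i ∈ Finset.Icc 1 n,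
        (inner ℝ (mulVecE M (Q r i)) d : ℝ) = ∑ j ∈ (Finset.Icc 1 n).erase i, g i j := by
      intro i hi
      rw [hcrit r i hi, sum_inner]
      refine Finset.sum_congr rfl fun j hj => ?_
      rw [real_inner_smul_left, hg]
      ring
    -- split into cluster + far parts
    have hsplit : ∀ i ∈ Finset.Icc 1 l,
        (Finset.Icc 1 n).erase i =
          (Finset.Icc 1 l).erase i ∪ Finset.Icc (l + 1) n := by
      intro i hi
      simp only [Finset.mem_Icc] at hi
      ext j
      simp only [Finset.mem_erase, Finset.mem_Icc, Finset.mem_union]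
      omega
    have hdisj : ∀ i ∈ Finset.Icc 1 l,
        Disjoint ((Finset.Icc 1 l).erase i) (Finset.Icc (l + 1) n) := by
      intro i _
      rw [Finset.disjoint_left]
      intro j hj hj'
      simp only [Finset.mem_erase, Finset.mem_Icc] at hj hj'
      omega
    have key2 : ∀ i ∈ Finset.Icc 1 l,
        (inner ℝ (mulVecE M (Q r i)) d : ℝ) =
          (∑ j ∈ (Finset.Icc 1 l).erase i, g i j) + ∑ j ∈ Finset.Icc (l + 1) n, g i j := by
      intro i hi
      rw [key i (hCI i hi), hsplit i hi, Finset.sum_union (hdisj i hi)]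
    -- antisymmetry
    have hanti : ∀ i j : ℕ, m i * g i j + m j * g j i = 0 := by
      intro i j
      have h1 : Q r j - Q r i = -(Q r i - Q r j) := by abel
      simp only [hg, h1, norm_neg, inner_neg_left]
      ring
    -- the antisymmetric double sum vanishes
    set S₀ : ℝ := ∑ i ∈ Finset.Icc 1 l, ∑ j ∈ (Finset.Icc 1 l).erase i, m i * g i j with hS₀
    have hS₀swap : S₀ = ∑ i ∈ Finset.Icc 1 l, ∑ j ∈ (Finset.Icc 1 l).erase i, m j * g j i := by
      rw [hS₀]
      exact Finset.sum_comm' (by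
        intro x y
        simp only [Finset.mem_erase, Finset.mem_Icc]
        omega)
    have hS₀zero : S₀ = 0 := by
      have h2 : S₀ + S₀ = 0 := by
        nth_rewrite 2 [hS₀swap]
        rw [hS₀, ← Finset.sum_add_distrib]
        refine Finset.sum_eq_zero fun i _ => ?_
        rw [← Finset.sum_add_distrib]
        exact Finset.sum_eq_zero fun j _ => hanti i j
      linarith
    -- abbreviations
    set P : ℕ → ℝ := fun i => (inner ℝ (mulVecE M (Q r i)) d : ℝ) with hP
    set Af : ℕ → ℝ := fun i => ∑ j ∈ (Finset.Icc 1 l).erase i, g i j with hAf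
    set Bf : ℕ → ℝ := fun i => ∑ j ∈ Finset.Icc (l + 1) n, g i j with hBf
    set Mc : ℝ := ∑ i ∈ Finset.Icc 1 l, m i with hMc
    have hMcpos : 0 < Mc := by
      rw [hMc]
      refine Finset.sum_pos (fun i hi => hm i (hCI i hi)) ⟨1, h1C⟩
    -- the key identity for S := ∑ mᵢ (P 1 - P i)
    set S : ℝ := ∑ i ∈ Finset.Icc 1 l, m i * (P 1 - P i) with hS
    have hSid : S = Mc * Af 1 + ∑ i ∈ Finset.Icc 1 l, m i * (Bf 1 - Bf i) := by
      have hPi : ∀ i ∈ Finset.Icc 1 l, P i = Af i + Bf i := fun i hi => key2 i hi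
      rw [hS]
      have : ∀ i ∈ Finset.Icc 1 l,
          m i * (P 1 - P i) = m i * Af 1 + m i * (Bf 1 - Bf i) - m i * g i 1 * 0 - (m i * Af i) := by
        intro i hi
        rw [hPi i hi, hPi 1 h1C]
        ring
      rw [Finset.sum_congr rfl this]
      simp only [Finset.sum_sub_distrib, Finset.sum_add_distrib, mul_zero, sub_zero]
      have h3 : ∑ i ∈ Finset.Icc 1 l, m i * Af i = S₀ := by
        rw [hS₀]
        exact Finset.sum_congr rfl fun i _ => by rw [hAf]; exact Finset.mul_sum _ _ _
      rw [h3, hS₀zero, ← Finset.sum_mul]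
      ring
    -- upper bound for S
    have hPbound : ∀ i ∈ Finset.Icc 1 l, P 1 - P i ≤ K * τ * τ := by
      intro i hi
      have h4 : P 1 - P i = (inner ℝ (mulVecE M (Q r 1 - Q r i)) d : ℝ) := by
        rw [hP]
        simp only
        rw [← inner_sub_left, hFsub]
      rw [h4]
      calc (inner ℝ (mulVecE M (Q r 1 - Q r i)) d : ℝ)
          ≤ ‖mulVecE M (Q r 1 - Q r i)‖ * ‖d‖ := real_inner_le_norm _ _
        _ ≤ (K * ‖Q r 1 - Q r i‖) * ‖d‖ := by
            apply mul_le_mul_of_nonneg_right (hFbound _) (norm_nonneg _)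
        _ ≤ (K * τ) * τ := by
            apply mul_le_mul_of_nonneg_right _ (norm_nonneg _)
            exact mul_le_mul_of_nonneg_left (hmax r 1 h1C i hi) hK0
        _ = K * τ * τ := by ring
    have hSupper : S ≤ Mc * (K * τ * τ) := by
      rw [hS, hMc, Finset.sum_mul]
      refine Finset.sum_le_sum fun i hi => ?_
      exact mul_le_mul_of_nonneg_left (hPbound i hi) (hm i (hCI i hi)).le
    -- lower bound: cluster terms of Af 1 are nonnegative
    have hg1nonneg : ∀ j ∈ (Finset.Icc 1 l).erase 1, 0 ≤ g 1 j := by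
      intro j hj
      have hjC : j ∈ Finset.Icc 1 l := (Finset.mem_erase.mp hj).2
      have hinner : 0 ≤ (inner ℝ (Q r 1 - Q r j) d : ℝ) := by
        have hrw : Q r 1 - Q r j = d + (Q r l - Q r j) := by rw [hd]; abel
        have habs := abs_real_inner_le_norm (Q r l - Q r j) d
        have hle : ‖Q r l - Q r j‖ ≤ τ := hmax r l hlC j hjC
        have hinn : (inner ℝ d d : ℝ) = τ ^ 2 := by
          rw [hτ]; exact real_inner_self_eq_norm_sq d
        rw [hrw, inner_add_left, hinn]
        have := abs_le.mp habs
        nlinarith [norm_nonneg d, this.1]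
      exact mul_nonneg (hm j (hCI j hjC)).le
        (mul_nonneg (Real.rpow_nonneg (norm_nonneg _) _) hinner)
    have hAf1 : m l * (τ ^ (2 * a) * τ ^ 2) ≤ Af 1 := by
      have hlmem : l ∈ (Finset.Icc 1 l).erase 1 := Finset.mem_erase.mpr ⟨(by omega), hlC⟩
      have hgl : g 1 l = m l * (τ ^ (2 * a) * τ ^ 2) := by
        rw [hg]
        simp only [← hd, ← hτ]
        rw [real_inner_self_eq_norm_sq]
      rw [hAf, ← hgl]
      exact Finset.single_le_sum hg1nonneg hlmem
    -- far terms are bounded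
    have hgfar : ∀ i ∈ Finset.Icc 1 l, ∀ j ∈ Finset.Icc (l + 1) n,
        |g i j| ≤ m j * (δ ^ (2 * a + 1) * τ) := by
      intro i hi j hj
      have hδle : δ ≤ ‖Q r i - Q r j‖ := hfar r i hi j hj
      have hpos : 0 < ‖Q r i - Q r j‖ := lt_of_lt_of_le hδ hδle
      have hmj : 0 < m j := hm j (hFI j hj)
      rw [hg, abs_mul, abs_of_pos hmj, abs_mul,
        abs_of_nonneg (Real.rpow_nonneg (norm_nonneg _) _)]
      apply mul_le_mul_of_nonneg_left _ hmj.le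
      calc ‖Q r i - Q r j‖ ^ (2 * a) * |(inner ℝ (Q r i - Q r j) d : ℝ)|
          ≤ ‖Q r i - Q r j‖ ^ (2 * a) * (‖Q r i - Q r j‖ * τ) := by
            apply mul_le_mul_of_nonneg_left _ (Real.rpow_nonneg (norm_nonneg _) _)
            exact abs_real_inner_le_norm _ _
        _ = ‖Q r i - Q r j‖ ^ (2 * a + 1) * τ := by
            rw [Real.rpow_add_one hpos.ne']
            ring
        _ ≤ δ ^ (2 * a + 1) * τ := by
            apply mul_le_mul_of_nonneg_right _ hτp.le
            exact Real.rpow_le_rpow_of_nonpos hδ hδle hexp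
    have hBfbound : ∀ i ∈ Finset.Icc 1 l, |Bf i| ≤ B₀ * τ := by
      intro i hi
      rw [hBf]
      calc |∑ j ∈ Finset.Icc (l + 1) n, g i j|
          ≤ ∑ j ∈ Finset.Icc (l + 1) n, |g i j| := Finset.abs_sum_le_sum_abs _ _
        _ ≤ ∑ j ∈ Finset.Icc (l + 1) n, m j * (δ ^ (2 * a + 1) * τ) :=
            Finset.sum_le_sum fun j hj => hgfar i hi j hj
        _ = B₀ * τ := by rw [hB₀def, ← Finset.sum_mul]; ring
    have hSlower : Mc * (m l * (τ ^ (2 * a) * τ ^ 2)) - Mc * (2 * (B₀ * τ)) ≤ S := by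
      rw [hSid]
      have h5 : Mc * (m l * (τ ^ (2 * a) * τ ^ 2)) ≤ Mc * Af 1 :=
        mul_le_mul_of_nonneg_left hAf1 hMcpos.le
      have h6 : -(Mc * (2 * (B₀ * τ))) ≤ ∑ i ∈ Finset.Icc 1 l, m i * (Bf 1 - Bf i) := by
        rw [hMc, Finset.sum_mul, ← Finset.sum_neg_distrib]
        refine Finset.sum_le_sum fun i hi => ?_
        have h7 : |Bf 1 - Bf i| ≤ 2 * (B₀ * τ) := by
          calc |Bf 1 - Bf i| ≤ |Bf 1| + |Bf i| := abs_sub _ _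
            _ ≤ B₀ * τ + B₀ * τ := add_le_add (hBfbound 1 h1C) (hBfbound i hi)
            _ = 2 * (B₀ * τ) := by ring
        have h8 := (abs_le.mp h7).1
        have hmi := (hm i (hCI i hi)).le
        nlinarith
      linarith
    -- combine: m l * τ^(2a) * τ² ≤ K τ² + 2 B₀ τ
    have hcomb : m l * (τ ^ (2 * a) * τ ^ 2) ≤ K * τ * τ + 2 * (B₀ * τ) := by
      have h9 := hSlower.trans hSupper
      have h10 : Mc * (m l * (τ ^ (2 * a) * τ ^ 2)) ≤ Mc * (K * τ * τ + 2 * (B₀ * τ)) := by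
        rw [mul_add]
        linarith
      exact le_of_mul_le_mul_left h10 hMcpos
    -- divide by τ
    have hτrw : τ ^ (2 * a) * τ ^ 2 = τ ^ (2 * a + 1) * τ := by
      rw [Real.rpow_add_one hτp.ne']
      ring
    rw [hτrw] at hcomb
    have h11 : (m l * τ ^ (2 * a + 1)) * τ ≤ (K * τ + 2 * B₀) * τ := by
      calc (m l * τ ^ (2 * a + 1)) * τ = m l * (τ ^ (2 * a + 1) * τ) := by ring
        _ ≤ K * τ * τ + 2 * (B₀ * τ) := hcomb
        _ = (K * τ + 2 * B₀) * τ := by ring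
    exact le_of_mul_le_mul_right h11 hτp
  -- now derive the contradiction using the limits
  have hτ0 : Tendsto (fun r => ‖Q r 1 - Q r l‖) atTop (nhds 0) := hcollapse 1 h1C l hlC
  have htop : Tendsto (fun r => ‖Q r 1 - Q r l‖ ^ (2 * a + 1)) atTop atTop := by
    have hinv : Tendsto (fun r => (‖Q r 1 - Q r l‖)⁻¹) atTop atTop :=
      tendsto_inv_nhdsGT_zero.comp
        (tendsto_nhdsWithin_of_tendsto_nhds_of_eventually_within _ hτ0
          (Filter.Eventually.of_forall fun r => hτpos r))
    have hpow : Tendsto (fun x : ℝ => x ^ (-(2 * a + 1))) atTop atTop :=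
      tendsto_rpow_atTop (by linarith)
    refine (hpow.comp hinv).congr fun r => ?_
    simp only [Function.comp]
    rw [Real.inv_rpow (norm_nonneg _), Real.rpow_neg (norm_nonneg _), inv_inv]
  have hev1 : ∀ᶠ r in atTop,
      (K + 2 * B₀ + 1) / m l ≤ ‖Q r 1 - Q r l‖ ^ (2 * a + 1) :=
    htop.eventually_ge_atTop _
  have hev2 : ∀ᶠ r in atTop, ‖Q r 1 - Q r l‖ < 1 :=
    hτ0.eventually_lt_const (by norm_num)
  obtain ⟨r, h1r, h2r⟩ := (hev1.and hev2).exists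
  have hmain := main r
  have h3r : K + 2 * B₀ + 1 ≤ ‖Q r 1 - Q r l‖ ^ (2 * a + 1) * m l := (div_le_iff₀ hml).mp h1r
  rw [mul_comm] at h3r
  have h4r : K * ‖Q r 1 - Q r l‖ ≤ K * 1 := mul_le_mul_of_nonneg_left h2r.le hK0
  linarith
end

section
/- For a < -1/2, c > 0, and fixed masses m₁,...,m_n > 0 and invertible diagonal 𝐀, the set of configurations (Q₁,...,Q_n) ∈ (ℝ^k)^n satisfying the relative equilibrium criterion and ‖Q_i - Q_j‖ ≥ c for all i ≠ j is closed and bounded, hence compact. -/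
open Real Finset Matrix Filter

lemma continuous_mulVecE {k : ℕ} (M : Matrix (Fin k) (Fin k) ℝ) :
    Continuous (mulVecE M) := by
  have h : IsLinearMap ℝ (mulVecE M) :=
    ⟨fun x y => by simp [mulVecE, Matrix.mulVec_add], fun r x => by simp [mulVecE, Matrix.mulVec_smul]⟩
  exact (IsLinearMap.mk' _ h).continuous_of_finiteDimensional

lemma Amat_sq {k : ℕ} (A : Fin (k / 2) → ℝ) :
    (Amat k A) ^ 2 = Matrix.diagonal
      (fun i : Fin k => (if h : (i : ℕ) / 2 < k / 2 then A ⟨(i : ℕ) / 2, h⟩ else 0) ^ 2) := by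
  rw [Amat, Matrix.diagonal_pow]
  rfl

lemma mulVecE_diagonal {k : ℕ} (g : Fin k → ℝ) (x : EuclideanSpace ℝ (Fin k)) (i : Fin k) :
    mulVecE (Matrix.diagonal g) x i = g i * x i := by
  simp [mulVecE, Matrix.mulVec_diagonal]

/-- the set of relative equilibrium configurations with mutual distances
at least `c` is closed, bounded, and compact. -/
theorem equilibria_set_compact {k n : ℕ} (hk : Even k) (A : Fin (k / 2) → ℝ)
    (hA : ∀ s, 0 < A s) (m : Fin n → ℝ) (hm : ∀ i, 0 < m i) (a c : ℝ)
    (ha : a < -1/2) (hc : 0 < c) :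
    IsClosed {Q : Fin n → EuclideanSpace ℝ (Fin k) |
        (∀ i, mulVecE ((Amat k A) ^ 2) (Q i) =
          ∑ j ∈ Finset.univ.filter (· ≠ i), (m j * ‖Q i - Q j‖ ^ (2 * a)) • (Q i - Q j)) ∧
        ∀ i j, i ≠ j → c ≤ ‖Q i - Q j‖} ∧
    Bornology.IsBounded {Q : Fin n → EuclideanSpace ℝ (Fin k) |
        (∀ i, mulVecE ((Amat k A) ^ 2) (Q i) =
          ∑ j ∈ Finset.univ.filter (· ≠ i), (m j * ‖Q i - Q j‖ ^ (2 * a)) • (Q i - Q j)) ∧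
        ∀ i j, i ≠ j → c ≤ ‖Q i - Q j‖} ∧
    IsCompact {Q : Fin n → EuclideanSpace ℝ (Fin k) |
        (∀ i, mulVecE ((Amat k A) ^ 2) (Q i) =
          ∑ j ∈ Finset.univ.filter (· ≠ i), (m j * ‖Q i - Q j‖ ^ (2 * a)) • (Q i - Q j)) ∧
        ∀ i j, i ≠ j → c ≤ ‖Q i - Q j‖} := by
  classical
  set S := {Q : Fin n → EuclideanSpace ℝ (Fin k) |
      (∀ i, mulVecE ((Amat k A) ^ 2) (Q i) =
        ∑ j ∈ Finset.univ.filter (· ≠ i), (m j * ‖Q i - Q j‖ ^ (2 * a)) • (Q i - Q j)) ∧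
      ∀ i j, i ≠ j → c ≤ ‖Q i - Q j‖} with hSdef
  -- the distance-constraint set
  have hD : IsClosed {Q : Fin n → EuclideanSpace ℝ (Fin k) | ∀ i j, i ≠ j → c ≤ ‖Q i - Q j‖} := by
    have heq : {Q : Fin n → EuclideanSpace ℝ (Fin k) | ∀ i j, i ≠ j → c ≤ ‖Q i - Q j‖}
        = ⋂ i, ⋂ j, {Q : Fin n → EuclideanSpace ℝ (Fin k) | i ≠ j → c ≤ ‖Q i - Q j‖} := by
      ext Q; simp [Set.mem_iInter]
    rw [heq]
    refine isClosed_iInter fun i => isClosed_iInter fun j => ?_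
    by_cases hij : i = j
    · have : {Q : Fin n → EuclideanSpace ℝ (Fin k) | i ≠ j → c ≤ ‖Q i - Q j‖} = Set.univ := by
        ext Q; simp [hij]
      rw [this]; exact isClosed_univ
    · have : {Q : Fin n → EuclideanSpace ℝ (Fin k) | i ≠ j → c ≤ ‖Q i - Q j‖}
          = {Q : Fin n → EuclideanSpace ℝ (Fin k) | c ≤ ‖Q i - Q j‖} := by
        ext Q; simp [hij]
      rw [this]
      exact isClosed_le continuous_const
        (((continuous_apply i).sub (continuous_apply j)).norm)
  -- the modified (globally continuous) equations
  have hCcl : IsClosed {Q : Fin n → EuclideanSpace ℝ (Fin k) |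
      ∀ i, mulVecE ((Amat k A) ^ 2) (Q i) =
        ∑ j ∈ Finset.univ.filter (· ≠ i),
          (m j * (max c ‖Q i - Q j‖) ^ (2 * a)) • (Q i - Q j)} := by
    have heq : {Q : Fin n → EuclideanSpace ℝ (Fin k) |
        ∀ i, mulVecE ((Amat k A) ^ 2) (Q i) =
          ∑ j ∈ Finset.univ.filter (· ≠ i),
            (m j * (max c ‖Q i - Q j‖) ^ (2 * a)) • (Q i - Q j)}
        = ⋂ i, {Q : Fin n → EuclideanSpace ℝ (Fin k) |
            mulVecE ((Amat k A) ^ 2) (Q i) =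
              ∑ j ∈ Finset.univ.filter (· ≠ i),
                (m j * (max c ‖Q i - Q j‖) ^ (2 * a)) • (Q i - Q j)} := by
      ext Q; simp [Set.mem_iInter]
    rw [heq]
    refine isClosed_iInter fun i => isClosed_eq ?_ ?_
    · exact (continuous_mulVecE _).comp (continuous_apply i)
    · refine continuous_finset_sum _ fun j _ => Continuous.smul (f := fun Q : Fin n → EuclideanSpace ℝ (Fin k) => m j * (max c ‖Q i - Q j‖) ^ (2 * a)) (g := fun Q : Fin n → EuclideanSpace ℝ (Fin k) => Q i - Q j) ?_ ?_
      · refine continuous_const.mul (Continuous.rpow_const ?_ fun Q => Or.inl ?_)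
        · exact continuous_const.max
            (((continuous_apply i).sub (continuous_apply j)).norm)
        · exact (lt_max_iff.mpr (Or.inl hc)).ne'
      · exact (continuous_apply i).sub (continuous_apply j)
  -- S as an intersection of closed sets
  have hSeq : S = {Q : Fin n → EuclideanSpace ℝ (Fin k) |
      ∀ i, mulVecE ((Amat k A) ^ 2) (Q i) =
        ∑ j ∈ Finset.univ.filter (· ≠ i),
          (m j * (max c ‖Q i - Q j‖) ^ (2 * a)) • (Q i - Q j)}
      ∩ {Q : Fin n → EuclideanSpace ℝ (Fin k) | ∀ i j, i ≠ j → c ≤ ‖Q i - Q j‖} := by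
    ext Q
    simp only [hSdef, Set.mem_setOf_eq, Set.mem_inter_iff]
    constructor
    · rintro ⟨h1, h2⟩
      refine ⟨fun i => ?_, h2⟩
      rw [h1 i]
      refine Finset.sum_congr rfl fun j hj => ?_
      rw [max_eq_right (h2 i j (Ne.symm (Finset.mem_filter.mp hj).2))]
    · rintro ⟨h1, h2⟩
      refine ⟨fun i => ?_, h2⟩
      rw [h1 i]
      refine Finset.sum_congr rfl fun j hj => ?_
      rw [max_eq_right (h2 i j (Ne.symm (Finset.mem_filter.mp hj).2))]
  have hclosed : IsClosed S := by
    rw [hSeq]; exact hCcl.inter hD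
  -- boundedness
  have hbdd : Bornology.IsBounded S := by
    rcases Nat.eq_zero_or_pos k with hk0 | hkpos
    · subst hk0
      haveI : Subsingleton (EuclideanSpace ℝ (Fin 0)) :=
        ⟨fun x y => PiLp.ext fun i => Fin.elim0 i⟩
      exact Set.subsingleton_of_subsingleton.finite.isBounded
    · have hk2 : 0 < k / 2 := Nat.div_lt_div_of_lt_of_dvd hk.two_dvd hkpos
      haveI : Nonempty (Fin (k / 2)) := ⟨⟨0, hk2⟩⟩
      set ν : ℝ := Finset.univ.inf' Finset.univ_nonempty A with hνdef
      have hν : 0 < ν := by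
        rw [hνdef, Finset.lt_inf'_iff]
        exact fun b _ => hA b
      set μ : ℝ := ν ^ 2 with hμdef
      have hμ : 0 < μ := pow_pos hν 2
      set M : ℝ := (∑ j, m j) * c ^ (2 * a + 1) with hMdef
      have hM : 0 ≤ M :=
        mul_nonneg (Finset.sum_nonneg fun j _ => (hm j).le) (Real.rpow_nonneg hc.le _)
      set g : Fin k → ℝ :=
        fun t => (if h : (t : ℕ) / 2 < k / 2 then A ⟨(t : ℕ) / 2, h⟩ else 0) ^ 2 with hgdef
      have hgi : ∀ t : Fin k, μ ≤ g t := by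
        intro t
        have ht : (t : ℕ) / 2 < k / 2 := Nat.div_lt_div_of_lt_of_dvd hk.two_dvd t.2
        rw [hgdef]
        simp only [dif_pos ht]
        exact pow_le_pow_left₀ hν.le (Finset.inf'_le A (Finset.mem_univ _)) 2
      -- lower bound for the diagonal action
      have hlow : ∀ x : EuclideanSpace ℝ (Fin k),
          μ * ‖x‖ ≤ ‖mulVecE ((Amat k A) ^ 2) x‖ := by
        intro x
        rw [Amat_sq, EuclideanSpace.norm_eq, EuclideanSpace.norm_eq]
        have hterm : ∀ t : Fin k,
            μ ^ 2 * ‖x t‖ ^ 2 ≤ ‖mulVecE (Matrix.diagonal g) x t‖ ^ 2 := by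
          intro t
          rw [mulVecE_diagonal, Real.norm_eq_abs, Real.norm_eq_abs, sq_abs, sq_abs, mul_pow]
          exact mul_le_mul_of_nonneg_right
            (pow_le_pow_left₀ hμ.le (hgi t) 2) (sq_abs (x t) ▸ sq_nonneg (x t))
        calc μ * Real.sqrt (∑ t, ‖x t‖ ^ 2)
            = Real.sqrt (μ ^ 2 * ∑ t, ‖x t‖ ^ 2) := by
              rw [Real.sqrt_mul (sq_nonneg μ), Real.sqrt_sq hμ.le]
          _ = Real.sqrt (∑ t, μ ^ 2 * ‖x t‖ ^ 2) := by rw [Finset.mul_sum]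
          _ ≤ Real.sqrt (∑ t, ‖mulVecE (Matrix.diagonal g) x t‖ ^ 2) :=
              Real.sqrt_le_sqrt (Finset.sum_le_sum fun t _ => hterm t)
      -- per-point norm bound
      have hQbound : ∀ Q ∈ S, ∀ i, ‖Q i‖ ≤ M / μ := by
        intro Q hQ i
        obtain ⟨h1, h2⟩ := hQ
        have hub : ‖mulVecE ((Amat k A) ^ 2) (Q i)‖ ≤ M := by
          rw [h1 i]
          calc ‖∑ j ∈ Finset.univ.filter (· ≠ i),
                (m j * ‖Q i - Q j‖ ^ (2 * a)) • (Q i - Q j)‖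
              ≤ ∑ j ∈ Finset.univ.filter (· ≠ i),
                ‖(m j * ‖Q i - Q j‖ ^ (2 * a)) • (Q i - Q j)‖ := norm_sum_le _ _
            _ ≤ ∑ j ∈ Finset.univ.filter (· ≠ i), m j * c ^ (2 * a + 1) := by
                refine Finset.sum_le_sum fun j hj => ?_
                have hcn : c ≤ ‖Q i - Q j‖ :=
                  h2 i j (Ne.symm (Finset.mem_filter.mp hj).2)
                have hpos : (0 : ℝ) < ‖Q i - Q j‖ := hc.trans_le hcn
                rw [norm_smul, Real.norm_eq_abs,
                  abs_of_nonneg (mul_nonneg (hm j).le (Real.rpow_nonneg (norm_nonneg _) _)),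
                  mul_assoc, ← Real.rpow_add_one hpos.ne' (2 * a)]
                exact mul_le_mul_of_nonneg_left
                  (Real.rpow_le_rpow_of_nonpos hc hcn (by linarith)) (hm j).le
            _ ≤ ∑ j, m j * c ^ (2 * a + 1) := by
                refine Finset.sum_le_sum_of_subset_of_nonneg
                  (Finset.filter_subset _ _) fun j _ _ =>
                  mul_nonneg (hm j).le (Real.rpow_nonneg hc.le _)
            _ = M := by rw [hMdef, Finset.sum_mul]
        have hlb := hlow (Q i)
        rw [le_div_iff₀ hμ, mul_comm]
        exact hlb.trans hub
      refine (Metric.isBounded_closedBall (x := (0 : Fin n → EuclideanSpace ℝ (Fin k))) (r := M / μ)).subset fun Q hQ => ?_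
      rw [Metric.mem_closedBall, dist_zero_right,
        pi_norm_le_iff_of_nonneg (div_nonneg hM hμ.le)]
      exact hQbound Q hQ
  exact ⟨hclosed, hbdd, Metric.isCompact_of_isClosed_isBounded hclosed hbdd⟩
end
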